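/- arXiv:1110.5689 — 4 statements merged into one kernel-verified Lean document; each statement's English description precedes it below -/
import Mathlib

section
/- Let θ ∈ [0,2π) and let T ∈ Sym(2,3) be given by t_{111}=cos θ, t_{112}=t_{121}=t_{211}=sin θ, t_{122}=t_{212}=t_{221}=−cos θ, t_{222}=−sin θ. Then for every unit vector u ∈ S¹, the contracted 2×2 symmetric matrix A(u) := T × u satisfies A(u)² = I₂; in particular λ₁(A(u)) = 1 = −λ₂(A(u)) for all u. -/
noncomputable section

/-- `v` is a unit vector in `ℝ^m`. -/
def isUnitVec {m : ℕ} (v : Fin m → ℝ) : Prop := ∑ i, v i ^ 2 = 1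

/-- The symmetric tensor `T ∈ Sym(2,3)` with `t₁₁₁ = cos θ`, `t₁₁₂ = sin θ`,
`t₁₂₂ = -cos θ`, `t₂₂₂ = -sin θ` (an entry depends only on the number of indices equal
to the second basis index). -/
def Tten (θ : ℝ) : (Fin 3 → Fin 2) → ℝ := fun idx =>
  let k := ∑ j, ((idx j : ℕ))
  if k = 0 then Real.cos θ
  else if k = 1 then Real.sin θ
  else if k = 2 then -Real.cos θ
  else -Real.sin θ

/-- The 2×2 symmetric matrix `A(u) = T × u`, contraction of `Tten θ` against `u`. -/
def Amat (θ : ℝ) (u : Fin 2 → ℝ) : Matrix (Fin 2) (Fin 2) ℝ :=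
  Matrix.of fun i j => ∑ k, Tten θ ![i, j, k] * u k

lemma Amat_eq (θ : ℝ) (u : Fin 2 → ℝ) :
    Amat θ u = !![Real.cos θ * u 0 + Real.sin θ * u 1,
                  Real.sin θ * u 0 - Real.cos θ * u 1;
                  Real.sin θ * u 0 - Real.cos θ * u 1,
                  -(Real.cos θ * u 0 + Real.sin θ * u 1)] := by
  ext i j
  fin_cases i <;> fin_cases j <;>
    simp [Amat, Tten, Fin.sum_univ_three, Fin.sum_univ_two] <;> ring

/-- For every unit vector `u ∈ S¹`, the contraction `A(u) = Tten θ × u` satisfies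
`A(u)² = I₂`; in particular `λ₁(A(u)) = 1 = -λ₂(A(u))`, i.e. the spectrum is `{1, -1}`. -/
theorem stmt13 (θ : ℝ) (u : Fin 2 → ℝ) (hu : isUnitVec u) :
    Amat θ u * Amat θ u = 1 ∧ spectrum ℝ (Amat θ u) = {1, -1} := by
  have hcs := Real.sin_sq_add_cos_sq θ
  have hu' : u 0 ^ 2 + u 1 ^ 2 = 1 := by
    simpa [isUnitVec, Fin.sum_univ_two] using hu
  set a := Real.cos θ * u 0 + Real.sin θ * u 1 with ha
  set b := Real.sin θ * u 0 - Real.cos θ * u 1 with hb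
  have hab : a ^ 2 + b ^ 2 = 1 := by
    rw [ha, hb]; nlinarith [hcs, hu']
  have hA : Amat θ u = !![a, b; b, -a] := Amat_eq θ u
  constructor
  · rw [hA]
    ext i j
    fin_cases i <;> fin_cases j <;>
      simp [Matrix.mul_apply, Fin.sum_univ_two, Matrix.one_apply] <;> nlinarith [hab]
  · ext x
    rw [spectrum.mem_iff, Matrix.isUnit_iff_isUnit_det, isUnit_iff_ne_zero, not_not]
    have hM : algebraMap ℝ (Matrix (Fin 2) (Fin 2) ℝ) x - Amat θ u
        = !![x - a, -b; -b, x + a] := by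
      rw [hA]; ext i j
      fin_cases i <;> fin_cases j <;>
        simp [Matrix.algebraMap_matrix_apply] <;> ring
    rw [hM, Matrix.det_fin_two_of]
    constructor
    · intro h
      have hx : (x - 1) * (x + 1) = 0 := by nlinarith [hab]
      rcases mul_eq_zero.mp hx with h1 | h1
      · left; linarith
      · right; show x = -1; linarith
    · rintro (rfl | h1)
      · nlinarith [hab]
      · have : x = -1 := h1
        subst this; nlinarith [hab]
end
end

section
/- The tensor T ∈ Sym(2,3) with t_{111}=1, t_{122}=t_{212}=t_{221}=−1 and all other entries zero (the θ=0 case) has exactly three distinct symmetric best rank one approximations, with critical unit vectors (1,0)ᵀ, (−1/2, √3/2)ᵀ, and (−1/2, −√3/2)ᵀ (up to sign). -/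
noncomputable section

/-- The decomposable tensor `x₁ ⊗ ⋯ ⊗ x_d`, as a multi-indexed array. -/
def dtens {ι : Type*} [Fintype ι] {n : ι → ℕ} (x : ∀ j, Fin (n j) → ℝ) :
    (∀ j, Fin (n j)) → ℝ :=
  fun idx => ∏ j, x j (idx j)

/-- Entrywise inner product of tensors. -/
def tinner {ι : Type*} [Fintype ι] [DecidableEq ι] {n : ι → ℕ}
    (S T : (∀ j, Fin (n j)) → ℝ) : ℝ :=
  ∑ idx, S idx * T idx

/-- Hilbert–Schmidt norm of a tensor. -/
def hsNorm {ι : Type*} [Fintype ι] [DecidableEq ι] {n : ι → ℕ}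
    (T : (∀ j, Fin (n j)) → ℝ) : ℝ :=
  Real.sqrt (∑ idx, T idx ^ 2)

/-- The spectral (`(∞,2)`-Schatten) norm of a tensor: the supremum of
`|⟨T, x₁ ⊗ ⋯ ⊗ x_d⟩|` over unit vectors `x_j`. -/
def specNorm {ι : Type*} [Fintype ι] [DecidableEq ι] {n : ι → ℕ}
    (T : (∀ j, Fin (n j)) → ℝ) : ℝ :=
  sSup {r | ∃ x : ∀ j, Fin (n j) → ℝ, (∀ j, isUnitVec (x j)) ∧ r = |tinner T (dtens x)|}

/-- The symmetric tensor `T ∈ Sym(2,3)` with `t₁₁₁ = 1`, `t₁₂₂ = t₂₁₂ = t₂₂₁ = -1`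
and all other entries zero (the `θ = 0` case). -/
def T0 : (Fin 3 → Fin 2) → ℝ := fun idx =>
  let k := ∑ j, ((idx j : ℕ))
  if k = 0 then 1 else if k = 2 then -1 else 0

/-- `B` is a symmetric best rank one approximation of `T`: `B = λ u ⊗ u ⊗ u` for a unit
vector `u`, and `B` minimizes the Hilbert–Schmidt distance to `T` over all decomposable
tensors with unit vector factors. -/
def IsSymBestRankOne (T B : (Fin 3 → Fin 2) → ℝ) : Prop :=
  (∃ (lam : ℝ) (u : Fin 2 → ℝ), isUnitVec u ∧ B = lam • dtens (fun _ : Fin 3 => u)) ∧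
  ∀ (s : ℝ) (x : Fin 3 → Fin 2 → ℝ), (∀ j, isUnitVec (x j)) →
    hsNorm (T - B) ≤ hsNorm (T - s • dtens x)

/-! ### Auxiliary lemmas -/

def e32 : Fin 8 ≃ (Fin 3 → Fin 2) :=
  (finCongr (by norm_num : 8 = 2^3)).trans (finFunctionFinEquiv (m := 2) (n := 3)).symm

lemma sum_f32 (g : (Fin 3 → Fin 2) → ℝ) :
    ∑ f, g f = g ![0,0,0] + g ![0,0,1] + g ![0,1,0] + g ![0,1,1]
      + g ![1,0,0] + g ![1,0,1] + g ![1,1,0] + g ![1,1,1] := by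
  rw [← Fintype.sum_equiv e32 (fun i : Fin 8 => g (e32 i)) g (fun _ => rfl), Fin.sum_univ_eight]
  have h : ∀ i : Fin 8, ∀ v : Fin 3 → Fin 2, e32 i = v → g (e32 i) = g v := fun i v h => by rw [h]
  rw [h 0 ![0,0,0] (by decide), h 1 ![1,0,0] (by decide), h 2 ![0,1,0] (by decide),
    h 3 ![1,1,0] (by decide), h 4 ![0,0,1] (by decide), h 5 ![1,0,1] (by decide),
    h 6 ![0,1,1] (by decide), h 7 ![1,1,1] (by decide)]
  ring

lemma tinner_T0 (x : Fin 3 → Fin 2 → ℝ) :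
    tinner T0 (dtens x) = x 0 0 * x 1 0 * x 2 0 - x 0 0 * x 1 1 * x 2 1
      - x 0 1 * x 1 0 * x 2 1 - x 0 1 * x 1 1 * x 2 0 := by
  rw [tinner, sum_f32]
  simp [T0, dtens, Fin.prod_univ_three, Fin.sum_univ_three]
  ring

lemma N2_dtens (x : Fin 3 → Fin 2 → ℝ) (h : ∀ j, ∑ i, x j i ^ 2 = 1) :
    ∑ idx, dtens x idx ^ 2 = 1 := by
  have h0 := h 0; have h1 := h 1; have h2 := h 2
  simp only [Fin.sum_univ_two] at h0 h1 h2
  rw [sum_f32]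
  simp [dtens, Fin.prod_univ_three]
  linear_combination (x 1 0^2 + x 1 1^2) * (x 2 0^2 + x 2 1^2) * h0
    + (x 2 0^2 + x 2 1^2) * h1 + h2

lemma N2_T0 : ∑ idx, T0 idx ^ 2 = 4 := by
  rw [sum_f32]; simp [T0, Fin.sum_univ_three]; norm_num

lemma N2_sub_smul (T X : (Fin 3 → Fin 2) → ℝ) (s : ℝ) :
    ∑ idx, (T - s • X) idx ^ 2
      = ∑ idx, T idx ^ 2 - 2 * s * tinner T X + s ^ 2 * ∑ idx, X idx ^ 2 := by
  simp only [Pi.sub_apply, Pi.smul_apply, smul_eq_mul, tinner, Finset.mul_sum,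
    ← Finset.sum_sub_distrib, ← Finset.sum_add_distrib]
  exact Finset.sum_congr rfl fun i _ => by ring

lemma key_ineq' (a b c d e f : ℝ) (h0 : a^2+b^2 = 1) (h1 : c^2+d^2 = 1) (h2 : e^2+f^2=1) :
    (a*c*e - a*d*f - b*c*f - b*d*e)^2 ≤ 1 := by
  have hAB : (a*c - b*d)^2 + (a*d + b*c)^2 = 1 := by
    linear_combination (c^2+d^2) * h0 + h1
  nlinarith [sq_nonneg ((a*c-b*d)*f + (a*d+b*c)*e), sq_nonneg ((a*c-b*d)*e - (a*d+b*c)*f)]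

lemma key_ineq (x : Fin 3 → Fin 2 → ℝ) (h : ∀ j, isUnitVec (x j)) :
    (tinner T0 (dtens x))^2 ≤ 1 := by
  have h0 := h 0; have h1 := h 1; have h2 := h 2
  simp only [isUnitVec, Fin.sum_univ_two] at h0 h1 h2
  rw [tinner_T0]
  exact key_ineq' _ _ _ _ _ _ h0 h1 h2

lemma cubic (a b : ℝ) (hu : a^2+b^2=1) (hf : a^3-3*a*b^2 = 1) :
    (a = 1 ∧ b = 0) ∨ (a = -(1/2) ∧ b = Real.sqrt 3/2) ∨ (a = -(1/2) ∧ b = -(Real.sqrt 3/2)) := by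
  have hs : Real.sqrt 3 ^ 2 = 3 := Real.sq_sqrt (by norm_num)
  have h4 : (a-1)*(2*a+1)^2 = 0 := by linear_combination hf + 3*a*hu
  rcases mul_eq_zero.1 h4 with ha | ha
  · have ha : a = 1 := by linarith [sub_eq_zero.1 ha]
    have hb : b = 0 := by
      have : b^2 = 0 := by linear_combination hu - (a+1)*ha
      exact pow_eq_zero_iff (by norm_num) |>.1 this
    exact Or.inl ⟨ha, hb⟩
  · have ha : a = -(1/2) := by nlinarith [sq_nonneg (2*a+1)]
    have hb : (b - Real.sqrt 3/2)*(b + Real.sqrt 3/2) = 0 := by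
      linear_combination hu - (1/4)*hs - (a - 1/2)*ha
    rcases mul_eq_zero.1 hb with hb | hb
    · exact Or.inr (Or.inl ⟨ha, by linarith [sub_eq_zero.1 hb]⟩)
    · refine Or.inr (Or.inr ⟨ha, ?_⟩); linarith [add_eq_zero_iff_eq_neg.1 hb]

lemma hs_le (A C : (Fin 3 → Fin 2) → ℝ) :
    hsNorm A ≤ hsNorm C ↔ ∑ idx, A idx ^ 2 ≤ ∑ idx, C idx ^ 2 := by
  rw [hsNorm, hsNorm, Real.sqrt_le_sqrt_iff (by positivity)]

lemma neg_smul_dtens (u : Fin 2 → ℝ) :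
    (-1 : ℝ) • dtens (fun _ : Fin 3 => u) = dtens (fun _ : Fin 3 => -u) := by
  funext idx
  simp [dtens, Fin.prod_univ_three]

/-- Each unit vector `u` with `⟨T0, u⊗u⊗u⟩ = 1` gives a best rank one approximation. -/
lemma best_of (u : Fin 2 → ℝ) (hu : isUnitVec u)
    (hf : tinner T0 (dtens fun _ : Fin 3 => u) = 1) :
    IsSymBestRankOne T0 (dtens fun _ : Fin 3 => u) := by
  constructor
  · exact ⟨1, u, hu, by rw [one_smul]⟩
  · intro s x hx
    rw [hs_le]
    have hA : ∑ idx, (T0 - dtens fun _ : Fin 3 => u) idx ^ 2 = 3 := by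
      have h := N2_sub_smul T0 (dtens fun _ : Fin 3 => u) 1
      rw [one_smul] at h
      rw [h, N2_T0, hf, N2_dtens _ (fun _ => hu)]
      ring
    have hp := key_ineq x hx
    rw [hA, N2_sub_smul, N2_T0, N2_dtens x hx]
    nlinarith [sq_nonneg (s - tinner T0 (dtens x))]

lemma unit_v1 : isUnitVec ![(1 : ℝ), 0] := by
  simp [isUnitVec, Fin.sum_univ_two]

lemma unit_v2 : isUnitVec ![(-(1 / 2) : ℝ), Real.sqrt 3 / 2] := by
  have hs : Real.sqrt 3 ^ 2 = 3 := Real.sq_sqrt (by norm_num)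
  simp only [isUnitVec, Fin.sum_univ_two, Matrix.cons_val_zero, Matrix.cons_val_one,
    Matrix.head_cons]
  nlinarith
lemma unit_v3 : isUnitVec ![(-(1 / 2) : ℝ), -(Real.sqrt 3 / 2)] := by
  have hs : Real.sqrt 3 ^ 2 = 3 := Real.sq_sqrt (by norm_num)
  simp only [isUnitVec, Fin.sum_univ_two, Matrix.cons_val_zero, Matrix.cons_val_one,
    Matrix.head_cons]
  nlinarith

lemma tin_v1 : tinner T0 (dtens fun _ : Fin 3 => ![(1 : ℝ), 0]) = 1 := by
  rw [tinner_T0]; norm_num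

lemma tin_v2 : tinner T0 (dtens fun _ : Fin 3 => ![(-(1 / 2) : ℝ), Real.sqrt 3 / 2]) = 1 := by
  have hs : Real.sqrt 3 ^ 2 = 3 := Real.sq_sqrt (by norm_num)
  rw [tinner_T0]
  simp only [Matrix.cons_val_zero, Matrix.cons_val_one, Matrix.head_cons]
  nlinarith

lemma tin_v3 : tinner T0 (dtens fun _ : Fin 3 => ![(-(1 / 2) : ℝ), -(Real.sqrt 3 / 2)]) = 1 := by
  have hs : Real.sqrt 3 ^ 2 = 3 := Real.sq_sqrt (by norm_num)
  rw [tinner_T0]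
  simp only [Matrix.cons_val_zero, Matrix.cons_val_one, Matrix.head_cons]
  nlinarith

lemma sqrt3_pos : (0:ℝ) < Real.sqrt 3 := Real.sqrt_pos.2 (by norm_num)

/-- The tensor `T0` has exactly three distinct symmetric best rank one approximations,
with critical unit vectors `(1,0)ᵀ`, `(-1/2, √3/2)ᵀ` and `(-1/2, -√3/2)ᵀ` (up to sign). -/
theorem stmt14 :
    {B | IsSymBestRankOne T0 B} =
        {dtens (fun _ : Fin 3 => ![(1 : ℝ), 0]),
         dtens (fun _ : Fin 3 => ![(-(1 / 2) : ℝ), Real.sqrt 3 / 2]),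
         dtens (fun _ : Fin 3 => ![(-(1 / 2) : ℝ), -(Real.sqrt 3 / 2)])} ∧
      dtens (fun _ : Fin 3 => ![(1 : ℝ), 0]) ≠
          dtens (fun _ : Fin 3 => ![(-(1 / 2) : ℝ), Real.sqrt 3 / 2]) ∧
      dtens (fun _ : Fin 3 => ![(1 : ℝ), 0]) ≠
          dtens (fun _ : Fin 3 => ![(-(1 / 2) : ℝ), -(Real.sqrt 3 / 2)]) ∧
      dtens (fun _ : Fin 3 => ![(-(1 / 2) : ℝ), Real.sqrt 3 / 2]) ≠
          dtens (fun _ : Fin 3 => ![(-(1 / 2) : ℝ), -(Real.sqrt 3 / 2)]) := by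
  refine ⟨?_, ?_, ?_, ?_⟩
  · ext B
    simp only [Set.mem_setOf_eq, Set.mem_insert_iff, Set.mem_singleton_iff]
    constructor
    · rintro ⟨⟨lam, u, hu, rfl⟩, hmin⟩
      have hu2 : u 0 ^ 2 + u 1 ^ 2 = 1 := by
        have := hu; simpa [isUnitVec, Fin.sum_univ_two] using this
      -- value of the cubic form at u
      set F := tinner T0 (dtens fun _ : Fin 3 => u) with hFdef
      have hFexp : F = u 0 ^ 3 - 3 * u 0 * u 1 ^ 2 := by
        rw [hFdef, tinner_T0]; ring
      have hp : F ^ 2 ≤ 1 := key_ineq _ (fun _ => hu)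
      have h1 := hmin 1 (fun _ => ![(1:ℝ), 0]) (fun _ => unit_v1)
      rw [hs_le, N2_sub_smul, N2_sub_smul, N2_T0, N2_dtens _ (fun _ => hu),
        N2_dtens _ (fun _ => unit_v1), ← hFdef, tin_v1] at h1
      have hlF : lam = F := by nlinarith [sq_nonneg (lam - F)]
      have hF2 : F ^ 2 = 1 := by nlinarith [sq_nonneg (lam - F)]
      have hFcases : F = 1 ∨ F = -1 := by
        have h0 : (F - 1) * (F + 1) = 0 := by linear_combination hF2
        rcases mul_eq_zero.1 h0 with h | h
        · exact Or.inl (by linarith)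
        · exact Or.inr (by linarith)
      rcases hFcases with hF1 | hF1
      · have hcub : u 0 ^ 3 - 3 * u 0 * u 1 ^ 2 = 1 := by rw [← hFexp, hF1]
        have hB : lam • (dtens fun _ : Fin 3 => u) = dtens fun _ : Fin 3 => u := by
          rw [hlF, hF1, one_smul]
        rcases cubic _ _ hu2 hcub with ⟨ha, hb⟩ | ⟨ha, hb⟩ | ⟨ha, hb⟩
        · left
          have hueq : u = ![(1 : ℝ), 0] := by
            funext i; fin_cases i <;> simp [ha, hb]
          rw [hB, hueq]
        · right; left
          have hueq : u = ![(-(1 / 2) : ℝ), Real.sqrt 3 / 2] := by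
            funext i; fin_cases i <;> simp [ha, hb]
          rw [hB, hueq]
        · right; right
          have hueq : u = ![(-(1 / 2) : ℝ), -(Real.sqrt 3 / 2)] := by
            funext i; fin_cases i <;> simp [ha, hb]
          rw [hB, hueq]
      · have hcub : (-(u 0)) ^ 3 - 3 * (-(u 0)) * (-(u 1)) ^ 2 = 1 := by
          have : u 0 ^ 3 - 3 * u 0 * u 1 ^ 2 = -1 := by rw [← hFexp, hF1]
          linear_combination -this
        have hu2' : (-(u 0)) ^ 2 + (-(u 1)) ^ 2 = 1 := by
          rw [neg_sq, neg_sq]; exact hu2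
        have hB : lam • (dtens fun _ : Fin 3 => u) = dtens fun _ : Fin 3 => (-u) := by
          rw [hlF, hF1, neg_smul_dtens]
        rcases cubic _ _ hu2' hcub with ⟨ha, hb⟩ | ⟨ha, hb⟩ | ⟨ha, hb⟩
        · left
          have hueq : -u = ![(1 : ℝ), 0] := by
            funext i; fin_cases i <;> simp <;> linarith
          rw [hB, hueq]
        · right; left
          have hueq : -u = ![(-(1 / 2) : ℝ), Real.sqrt 3 / 2] := by
            funext i; fin_cases i <;> simp <;> linarith
          rw [hB, hueq]
        · right; right
          have hueq : -u = ![(-(1 / 2) : ℝ), -(Real.sqrt 3 / 2)] := by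
            funext i; fin_cases i <;> simp <;> linarith
          rw [hB, hueq]
    · rintro (rfl | rfl | rfl)
      · exact best_of _ unit_v1 tin_v1
      · exact best_of _ unit_v2 tin_v2
      · exact best_of _ unit_v3 tin_v3
  · intro h
    have := congrFun h ![0,0,0]
    simp [dtens, Fin.prod_univ_three] at this
    nlinarith [sqrt3_pos]
  · intro h
    have := congrFun h ![0,0,0]
    simp [dtens, Fin.prod_univ_three] at this
    nlinarith [sqrt3_pos]
  · intro h
    have := congrFun h ![0,0,1]
    simp [dtens, Fin.prod_univ_three] at this
    nlinarith [sqrt3_pos]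
end
end

section
/- Let d ≥ 2 and T ∈ Sym(2,d) a nonzero symmetric d-tensor on ℝ². If T has a nonsymmetric best rank one approximation, then for every choice of indices i₃,…,i_d ∈ {1,2}, the 2×2 symmetric slice [t_{i,j,i₃,…,i_d}]_{i,j∈{1,2}} has zero trace, i.e., t_{1,1,i₃,…,i_d} + t_{2,2,i₃,…,i_d} = 0. -/
noncomputable section

namespace Stmt15Aux

def bv : Fin 2 → Fin 2 → ℝ := fun i i' => if i' = i then 1 else 0

def vth {D : ℕ} (θ : Fin D → ℝ) : Fin D → Fin 2 → ℝ :=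
  fun j => ![Real.cos (θ j), Real.sin (θ j)]

lemma fin2cases : ∀ i : Fin 2, i = 0 ∨ i = 1 := by decide

lemma vth_unit {D : ℕ} (θ : Fin D → ℝ) (j : Fin D) : isUnitVec (vth θ j) := by
  simp [isUnitVec, Fin.sum_univ_two, vth, Real.cos_sq_add_sin_sq]

lemma exists_angle (v : Fin 2 → ℝ) (hv : isUnitVec v) :
    ∃ θ : ℝ, Real.cos θ = v 0 ∧ Real.sin θ = v 1 := by
  have h : v 0 ^ 2 + v 1 ^ 2 = 1 := by simpa [isUnitVec, Fin.sum_univ_two] using hv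
  set z : ℂ := ⟨v 0, v 1⟩ with hz
  have habs : ‖z‖ = 1 := by
    rw [Complex.norm_def, Complex.normSq]
    simp only [MonoidWithZeroHom.coe_mk, ZeroHom.coe_mk]
    rw [show z.re * z.re + z.im * z.im = 1 from by nlinarith [h]]
    exact Real.sqrt_one
  have hz0 : z ≠ 0 := by
    intro h0
    rw [h0] at habs
    simp at habs
  refine ⟨Complex.arg z, ?_, ?_⟩
  · rw [Complex.cos_arg hz0, habs]; simp [hz]
  · rw [Complex.sin_arg, habs]; simp [hz]

variable {D : ℕ} (T : (Fin D → Fin 2) → ℝ)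

lemma dtens_q (x : Fin D → Fin 2 → ℝ) (hx : ∀ j, isUnitVec (x j)) :
    ∑ idx : Fin D → Fin 2, dtens x idx ^ 2 = 1 := by
  have h1 : ∀ idx : Fin D → Fin 2, dtens x idx ^ 2 = ∏ j, (x j (idx j)) ^ 2 := by
    intro idx
    rw [dtens, ← Finset.prod_pow]
  rw [Finset.sum_congr rfl fun idx _ => h1 idx]
  rw [← Fintype.piFinset_univ,
    ← Finset.prod_univ_sum (fun _ => Finset.univ) (fun (j : Fin D) (c : Fin 2) => x j c ^ 2)]
  exact Finset.prod_eq_one fun j _ => hx j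

lemma multi1 (j : Fin D) (x : Fin D → Fin 2 → ℝ) :
    tinner T (dtens x) = ∑ i : Fin 2, x j i * tinner T (dtens (Function.update x j (bv i))) := by
  have hprod : ∀ (v : Fin 2 → ℝ) (idx : Fin D → Fin 2),
      dtens (Function.update x j v) idx = v (idx j) * ∏ l ∈ Finset.univ.erase j, x l (idx l) := by
    intro v idx
    rw [dtens, ← Finset.mul_prod_erase Finset.univ _ (Finset.mem_univ j)]
    rw [Function.update_self]
    congr 1
    refine Finset.prod_congr rfl fun l hl => ?_
    rw [Function.update_of_ne (Finset.ne_of_mem_erase hl)]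
  have hx : ∀ idx : Fin D → Fin 2,
      dtens x idx = x j (idx j) * ∏ l ∈ Finset.univ.erase j, x l (idx l) := by
    intro idx
    rw [dtens, ← Finset.mul_prod_erase Finset.univ _ (Finset.mem_univ j)]
  have main : ∀ idx : Fin D → Fin 2, T idx * dtens x idx
      = ∑ i : Fin 2, x j i * (T idx * dtens (Function.update x j (bv i)) idx) := by
    intro idx
    rw [hx idx]
    rw [Finset.sum_congr rfl fun (i : Fin 2) _ => by rw [hprod (bv i) idx]]
    rcases fin2cases (idx j) with h | h <;> rw [h] <;>
      simp [bv, Fin.sum_univ_two] <;> ring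
  calc tinner T (dtens x)
      = ∑ idx : Fin D → Fin 2, ∑ i : Fin 2,
          x j i * (T idx * dtens (Function.update x j (bv i)) idx) :=
        Finset.sum_congr rfl (fun idx _ => main idx)
    _ = ∑ i : Fin 2, ∑ idx : Fin D → Fin 2,
          x j i * (T idx * dtens (Function.update x j (bv i)) idx) := Finset.sum_comm
    _ = ∑ i : Fin 2, x j i * tinner T (dtens (Function.update x j (bv i))) := by
        refine Finset.sum_congr rfl fun i _ => ?_
        rw [tinner, Finset.mul_sum]

lemma basis (g : Fin D → Fin 2) :
    tinner T (dtens (fun l => bv (g l))) = T g := by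
  unfold tinner
  rw [Finset.sum_eq_single g]
  · rw [dtens]
    rw [show (∏ l : Fin D, bv (g l) (g l)) = 1 from Finset.prod_eq_one fun l _ => by simp [bv]]
    ring
  · intro idx _ hne
    have : ∃ l, idx l ≠ g l := by
      by_contra hc
      push_neg at hc
      exact hne (funext hc)
    obtain ⟨l, hl⟩ := this
    rw [dtens, Finset.prod_eq_zero (Finset.mem_univ l) (by simp [bv, hl])]
    ring
  · intro h
    exact absurd (Finset.mem_univ g) h

lemma perm (hsym : ∀ (σ : Equiv.Perm (Fin D)) (idx : Fin D → Fin 2), T (idx ∘ σ) = T idx)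
    (σ : Equiv.Perm (Fin D)) (x : Fin D → Fin 2 → ℝ) :
    tinner T (dtens (fun l => x (σ l))) = tinner T (dtens x) := by
  unfold tinner
  have hstep : ∀ idx : Fin D → Fin 2,
      dtens (fun l => x (σ l)) idx = dtens x (fun m => idx (σ.symm m)) := by
    intro idx
    rw [dtens, dtens]
    rw [← Equiv.prod_comp σ (fun m => x m (idx (σ.symm m)))]
    exact Finset.prod_congr rfl fun l _ => by rw [Equiv.symm_apply_apply]
  rw [Finset.sum_congr rfl fun idx _ => by rw [hstep idx]]
  let e : (Fin D → Fin 2) ≃ (Fin D → Fin 2) :=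
    ⟨fun f => f ∘ σ, fun f => f ∘ σ.symm,
     fun f => by funext l; simp, fun f => by funext l; simp⟩
  refine (Fintype.sum_equiv e (fun idx => T idx * dtens x idx)
    (fun idx => T idx * dtens x (fun m => idx (σ.symm m))) ?_).symm
  intro idx
  have h1 : T ((idx : Fin D → Fin 2) ∘ σ) = T idx := hsym σ idx
  have h2 : (fun m => (e idx) (σ.symm m)) = idx := by
    funext m; simp [e]
  show T idx * dtens x idx = T (e idx) * dtens x (fun m => (e idx) (σ.symm m))
  rw [h2]
  have : e idx = idx ∘ σ := rfl
  rw [this, h1]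

lemma comp_swap {j k : Fin D} (hjk : j ≠ k) (X : Fin D → Fin 2 → ℝ) (v w : Fin 2 → ℝ) :
    (fun l => (Function.update (Function.update X j v) k w) (Equiv.swap j k l))
      = Function.update (Function.update X j w) k v := by
  funext l
  rcases eq_or_ne l j with rfl | hlj
  · rw [Equiv.swap_apply_left, Function.update_self, Function.update_of_ne hjk,
      Function.update_self]
  · rcases eq_or_ne l k with rfl | hlk
    · rw [Equiv.swap_apply_right, Function.update_of_ne hjk, Function.update_self,
        Function.update_self]
    · rw [Equiv.swap_apply_of_ne_of_ne hlj hlk, Function.update_of_ne hlk,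
        Function.update_of_ne hlj, Function.update_of_ne hlk, Function.update_of_ne hlj]

lemma twoslot {j k : Fin D} (hjk : j ≠ k) (X : Fin D → Fin 2 → ℝ) (v w : Fin 2 → ℝ) :
    tinner T (dtens (Function.update (Function.update X j v) k w))
      = ∑ i : Fin 2, ∑ i' : Fin 2, v i * w i' *
          tinner T (dtens (Function.update (Function.update X j (bv i)) k (bv i'))) := by
  rw [multi1 T j (Function.update (Function.update X j v) k w)]
  have hYj : (Function.update (Function.update X j v) k w) j = v := by
    rw [Function.update_of_ne hjk, Function.update_self]
  refine Finset.sum_congr rfl fun i _ => ?_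
  have hupd : Function.update (Function.update (Function.update X j v) k w) j (bv i)
      = Function.update (Function.update X j (bv i)) k w := by
    funext l
    rcases eq_or_ne l j with rfl | hlj
    · rw [Function.update_self, Function.update_of_ne hjk, Function.update_self]
    · rcases eq_or_ne l k with rfl | hlk
      · rw [Function.update_of_ne hlj, Function.update_self, Function.update_self]
      · rw [Function.update_of_ne hlj, Function.update_of_ne hlk, Function.update_of_ne hlj,
          Function.update_of_ne hlk, Function.update_of_ne hlj]
  rw [hYj, hupd, multi1 T k (Function.update (Function.update X j (bv i)) k w)]
  rw [show (Function.update (Function.update X j (bv i)) k w) k = w from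
    Function.update_self _ _ _]
  rw [Finset.mul_sum]
  refine Finset.sum_congr rfl fun i' _ => ?_
  rw [Function.update_idem]
  ring

lemma msym (hsym : ∀ (σ : Equiv.Perm (Fin D)) (idx : Fin D → Fin 2), T (idx ∘ σ) = T idx)
    {j k : Fin D} (hjk : j ≠ k) (X : Fin D → Fin 2 → ℝ) :
    tinner T (dtens (Function.update (Function.update X j (bv 0)) k (bv 1)))
      = tinner T (dtens (Function.update (Function.update X j (bv 1)) k (bv 0))) := by
  calc tinner T (dtens (Function.update (Function.update X j (bv 0)) k (bv 1)))
      = tinner T (dtens (fun l =>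
          (Function.update (Function.update X j (bv 1)) k (bv 0)) (Equiv.swap j k l))) := by
        rw [comp_swap hjk]
    _ = tinner T (dtens (Function.update (Function.update X j (bv 1)) k (bv 0))) :=
        perm T hsym (Equiv.swap j k) _

lemma qexp (s : ℝ) (X : (Fin D → Fin 2) → ℝ) :
    ∑ idx : Fin D → Fin 2, (T - s • X) idx ^ 2
      = (∑ idx : Fin D → Fin 2, T idx ^ 2) - 2 * s * tinner T X
        + s ^ 2 * ∑ idx : Fin D → Fin 2, X idx ^ 2 := by
  unfold tinner
  rw [Finset.mul_sum, Finset.mul_sum, ← Finset.sum_sub_distrib, ← Finset.sum_add_distrib]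
  refine Finset.sum_congr rfl fun idx _ => ?_
  simp only [Pi.sub_apply, Pi.smul_apply, smul_eq_mul]
  ring

lemma opt {a : ℝ} (u : Fin D → Fin 2 → ℝ) (hu : ∀ j, isUnitVec (u j))
    (hopt : ∀ (s : ℝ) (x : Fin D → Fin 2 → ℝ), (∀ j, isUnitVec (x j)) →
      hsNorm (T - a • dtens u) ≤ hsNorm (T - s • dtens x)) :
    tinner T (dtens u) = a ∧
      ∀ x : Fin D → Fin 2 → ℝ, (∀ j, isUnitVec (x j)) → tinner T (dtens x) ^ 2 ≤ a ^ 2 := by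
  have hQ : ∀ (s : ℝ) (x : Fin D → Fin 2 → ℝ), (∀ j, isUnitVec (x j)) →
      ∑ idx : Fin D → Fin 2, (T - a • dtens u) idx ^ 2
        ≤ ∑ idx : Fin D → Fin 2, (T - s • dtens x) idx ^ 2 := by
    intro s x hx
    have h1 := hopt s x hx
    have h2 : (0:ℝ) ≤ ∑ idx : Fin D → Fin 2, (T - a • dtens u) idx ^ 2 :=
      Finset.sum_nonneg fun _ _ => sq_nonneg _
    have h3 : (0:ℝ) ≤ ∑ idx : Fin D → Fin 2, (T - s • dtens x) idx ^ 2 :=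
      Finset.sum_nonneg fun _ _ => sq_nonneg _
    calc ∑ idx : Fin D → Fin 2, (T - a • dtens u) idx ^ 2
        = hsNorm (T - a • dtens u) ^ 2 := (Real.sq_sqrt h2).symm
      _ ≤ hsNorm (T - s • dtens x) ^ 2 :=
          pow_le_pow_left₀ (Real.sqrt_nonneg _) h1 2
      _ = ∑ idx : Fin D → Fin 2, (T - s • dtens x) idx ^ 2 := Real.sq_sqrt h3
  have hQu : ∀ (s : ℝ) (x : Fin D → Fin 2 → ℝ), (∀ j, isUnitVec (x j)) →
      (∑ idx : Fin D → Fin 2, T idx ^ 2) - 2 * a * tinner T (dtens u) + a ^ 2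
        ≤ (∑ idx : Fin D → Fin 2, T idx ^ 2) - 2 * s * tinner T (dtens x) + s ^ 2 := by
    intro s x hx
    have := hQ s x hx
    rw [qexp T a (dtens u), qexp T s (dtens x), dtens_q u hu, dtens_q x hx] at this
    simpa using this
  have hi : tinner T (dtens u) = a := by
    have h := hQu (tinner T (dtens u)) u hu
    have h2 : (a - tinner T (dtens u)) ^ 2 ≤ 0 := by nlinarith [h]
    have h3 := le_antisymm h2 (sq_nonneg _)
    have h4 := (pow_eq_zero_iff (two_ne_zero)).mp h3
    linarith [h4]
  refine ⟨hi, fun x hx => ?_⟩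
  have h := hQu (tinner T (dtens x)) x hx
  rw [hi] at h
  nlinarith [h]

lemma pair_core (M00 M01 M11 a α₀ β₀ : ℝ) (ha : a ≠ 0)
    (hb : ∀ α β : ℝ, (M00 * (Real.cos α * Real.cos β)
        + M01 * (Real.cos α * Real.sin β + Real.sin α * Real.cos β)
        + M11 * (Real.sin α * Real.sin β)) ^ 2 ≤ a ^ 2)
    (heq : M00 * (Real.cos α₀ * Real.cos β₀)
        + M01 * (Real.cos α₀ * Real.sin β₀ + Real.sin α₀ * Real.cos β₀)
        + M11 * (Real.sin α₀ * Real.sin β₀) = a)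
    (hnp : Real.sin (α₀ - β₀) ≠ 0) :
    M00 + M11 = 0 ∧ ∀ t : ℝ, M00 * (Real.cos (α₀ + t) * Real.cos (β₀ - t))
        + M01 * (Real.cos (α₀ + t) * Real.sin (β₀ - t) + Real.sin (α₀ + t) * Real.cos (β₀ - t))
        + M11 * (Real.sin (α₀ + t) * Real.sin (β₀ - t)) = a := by
  have key : ∀ A B : ℝ, M00 * (Real.cos A * Real.cos B)
      + M01 * (Real.cos A * Real.sin B + Real.sin A * Real.cos B)
      + M11 * (Real.sin A * Real.sin B)
      = (M00 + M11) / 2 * Real.cos (A - B)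
        + ((M00 - M11) / 2 * Real.cos (A + B) + M01 * Real.sin (A + B)) := by
    intro A B
    rw [Real.cos_sub, Real.cos_add, Real.sin_add]
    ring
  have hp2 := hb (α₀ - (α₀ - β₀) / 2) (β₀ + (α₀ - β₀) / 2)
  have hm2 := hb (α₀ + (Real.pi - (α₀ - β₀)) / 2) (β₀ - (Real.pi - (α₀ - β₀)) / 2)
  rw [key] at hp2 hm2 heq
  rw [show α₀ - (α₀ - β₀) / 2 - (β₀ + (α₀ - β₀) / 2) = 0 from by ring,
    show α₀ - (α₀ - β₀) / 2 + (β₀ + (α₀ - β₀) / 2) = α₀ + β₀ from by ring,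
    Real.cos_zero] at hp2
  rw [show α₀ + (Real.pi - (α₀ - β₀)) / 2 - (β₀ - (Real.pi - (α₀ - β₀)) / 2) = Real.pi from by ring,
    show α₀ + (Real.pi - (α₀ - β₀)) / 2 + (β₀ - (Real.pi - (α₀ - β₀)) / 2) = α₀ + β₀ from by ring,
    Real.cos_pi] at hm2
  set p := (M00 + M11) / 2 with hpdef
  set K := (M00 - M11) / 2 * Real.cos (α₀ + β₀) + M01 * Real.sin (α₀ + β₀) with hKdef
  have htrig := Real.sin_sq_add_cos_sq (α₀ - β₀)
  have hppos : Real.sin (α₀ - β₀) ^ 2 > 0 := by positivity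
  have h9 : (p + K - a) * (K - p - a) = -(p ^ 2 * Real.sin (α₀ - β₀) ^ 2) := by
    linear_combination (K - a - p * Real.cos (α₀ - β₀)) * heq + p ^ 2 * htrig
  have h8 : 0 ≤ (p + K - a) * (K - p - a) := by
    rcases ha.lt_or_gt with hlt | hgt
    · have h6 : a ≤ p + K := by nlinarith [hp2, sq_nonneg (p + K - a), sq_nonneg (p + K + a)]
      have h7 : a ≤ K - p := by nlinarith [hm2, sq_nonneg (K - p - a), sq_nonneg (K - p + a)]
      exact mul_nonneg (by linarith) (by linarith)
    · have h6 : p + K ≤ a := by nlinarith [hp2, sq_nonneg (p + K - a), sq_nonneg (p + K + a)]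
      have h7 : K - p ≤ a := by nlinarith [hm2, sq_nonneg (K - p - a), sq_nonneg (K - p + a)]
      exact mul_nonneg_iff.2 (Or.inr ⟨by linarith, by linarith⟩)
  have hpsq : p ^ 2 ≤ 0 := by nlinarith [h8, h9, hppos]
  have hpz : p = 0 := by
    have := le_antisymm hpsq (sq_nonneg p)
    exact (pow_eq_zero_iff (two_ne_zero)).mp this
  constructor
  · have : M00 + M11 = 2 * p := by rw [hpdef]; ring
    rw [this, hpz]; ring
  · intro t
    rw [key]
    rw [show α₀ + t + (β₀ - t) = α₀ + β₀ from by ring]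
    rw [hpz] at heq ⊢
    simp only [zero_mul, zero_add] at heq ⊢
    rw [← hKdef]
    exact heq

lemma slice_core (hsym : ∀ (σ : Equiv.Perm (Fin D)) (idx : Fin D → Fin 2), T (idx ∘ σ) = T idx)
    {a : ℝ} (ha : a ≠ 0)
    (hmax : ∀ x : Fin D → Fin 2 → ℝ, (∀ j, isUnitVec (x j)) → tinner T (dtens x) ^ 2 ≤ a ^ 2)
    (θ : Fin D → ℝ) {j k : Fin D} (hjk : j ≠ k)
    (hFθ : tinner T (dtens (vth θ)) = a) (hnp : Real.sin (θ j - θ k) ≠ 0) :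
    (tinner T (dtens (Function.update (Function.update (vth θ) j (bv 0)) k (bv 0)))
      + tinner T (dtens (Function.update (Function.update (vth θ) j (bv 1)) k (bv 1))) = 0)
    ∧ ∀ t : ℝ, tinner T (dtens (vth
        (Function.update (Function.update θ j (θ j + t)) k (θ k - t)))) = a := by
  have hVupd : ∀ (α β : ℝ),
      Function.update (Function.update (vth θ) j ![Real.cos α, Real.sin α]) k
          ![Real.cos β, Real.sin β]
        = vth (Function.update (Function.update θ j α) k β) := by
    intro α β
    funext l
    rcases eq_or_ne l j with rfl | hlj
    · rw [Function.update_of_ne hjk, Function.update_self]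
      show _ = ![Real.cos ((Function.update (Function.update θ l α) k β) l), _]
      rw [Function.update_of_ne hjk, Function.update_self]
    · rcases eq_or_ne l k with rfl | hlk
      · rw [Function.update_self]
        show _ = ![Real.cos ((Function.update (Function.update θ j α) l β) l), _]
        rw [Function.update_self]
      · rw [Function.update_of_ne hlk, Function.update_of_ne hlj]
        show vth θ l = ![Real.cos ((Function.update (Function.update θ j α) k β) l), _]
        rw [Function.update_of_ne hlk, Function.update_of_ne hlj]
        rfl
  have hms := msym T hsym hjk (vth θ)
  have hE : ∀ α β : ℝ,
      tinner T (dtens (Function.update (Function.update (vth θ) j ![Real.cos α, Real.sin α]) k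
          ![Real.cos β, Real.sin β]))
        = tinner T (dtens (Function.update (Function.update (vth θ) j (bv 0)) k (bv 0)))
            * (Real.cos α * Real.cos β)
          + tinner T (dtens (Function.update (Function.update (vth θ) j (bv 0)) k (bv 1)))
            * (Real.cos α * Real.sin β + Real.sin α * Real.cos β)
          + tinner T (dtens (Function.update (Function.update (vth θ) j (bv 1)) k (bv 1)))
            * (Real.sin α * Real.sin β) := by
    intro α β
    rw [twoslot T hjk]
    simp only [Fin.sum_univ_two, Matrix.cons_val_zero, Matrix.cons_val_one, Matrix.head_cons]
    rw [← hms]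
    ring
  have hb : ∀ α β : ℝ,
      (tinner T (dtens (Function.update (Function.update (vth θ) j (bv 0)) k (bv 0)))
            * (Real.cos α * Real.cos β)
          + tinner T (dtens (Function.update (Function.update (vth θ) j (bv 0)) k (bv 1)))
            * (Real.cos α * Real.sin β + Real.sin α * Real.cos β)
          + tinner T (dtens (Function.update (Function.update (vth θ) j (bv 1)) k (bv 1)))
            * (Real.sin α * Real.sin β)) ^ 2 ≤ a ^ 2 := by
    intro α β
    rw [← hE α β, hVupd α β]
    exact hmax _ (fun l => vth_unit _ l)
  have heqv : Function.update (Function.update (vth θ) j ![Real.cos (θ j), Real.sin (θ j)]) k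
      ![Real.cos (θ k), Real.sin (θ k)] = vth θ := by
    rw [show ![Real.cos (θ j), Real.sin (θ j)] = vth θ j from rfl,
      show ![Real.cos (θ k), Real.sin (θ k)] = vth θ k from rfl,
      Function.update_eq_self, Function.update_eq_self]
  have heq : tinner T (dtens (Function.update (Function.update (vth θ) j (bv 0)) k (bv 0)))
            * (Real.cos (θ j) * Real.cos (θ k))
          + tinner T (dtens (Function.update (Function.update (vth θ) j (bv 0)) k (bv 1)))
            * (Real.cos (θ j) * Real.sin (θ k) + Real.sin (θ j) * Real.cos (θ k))
          + tinner T (dtens (Function.update (Function.update (vth θ) j (bv 1)) k (bv 1)))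
            * (Real.sin (θ j) * Real.sin (θ k)) = a := by
    rw [← hE (θ j) (θ k), heqv]
    exact hFθ
  obtain ⟨hc1, hc2⟩ := pair_core _ _ _ a (θ j) (θ k) ha hb heq hnp
  refine ⟨hc1, fun t => ?_⟩
  rw [← hVupd (θ j + t) (θ k - t), hE (θ j + t) (θ k - t)]
  exact hc2 t

lemma sinsub {x y : ℝ} (hx : Real.sin x = 0) (hy : Real.sin y = 0) : Real.sin (x - y) = 0 := by
  rw [Real.sin_sub, hx, hy]; ring

lemma sin3ne : Real.sin (Real.pi / 3) ≠ 0 := by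
  rw [Real.sin_pi_div_three]; positivity

lemma sin23ne : Real.sin (2 * Real.pi / 3) ≠ 0 := by
  rw [show (2 * Real.pi / 3 : ℝ) = Real.pi - Real.pi / 3 by ring, Real.sin_pi_sub]
  exact sin3ne

lemma sin43ne : Real.sin (4 * Real.pi / 3) ≠ 0 := by
  rw [show (4 * Real.pi / 3 : ℝ) = Real.pi + Real.pi / 3 by ring, Real.sin_add, Real.sin_pi,
    Real.cos_pi]
  intro h
  apply sin3ne
  linarith [h]

lemma pick (x y : ℝ) : ∃ δ : ℝ, Real.sin (x - δ) ≠ 0 ∧ Real.sin (y + 2 * δ) ≠ 0 := by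
  by_contra hcon
  push_neg at hcon
  have hpair : ∀ δ₁ δ₂ : ℝ, Real.sin (x - δ₁) = 0 → Real.sin (x - δ₂) = 0 →
      Real.sin (δ₂ - δ₁) = 0 := by
    intro δ₁ δ₂ h1 h2
    have h3 := sinsub h1 h2
    rw [show x - δ₁ - (x - δ₂) = δ₂ - δ₁ by ring] at h3
    exact h3
  have hpair2 : ∀ δ₁ δ₂ : ℝ, Real.sin (y + 2 * δ₁) = 0 → Real.sin (y + 2 * δ₂) = 0 →
      Real.sin (2 * δ₁ - 2 * δ₂) = 0 := by
    intro δ₁ δ₂ h1 h2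
    have h3 := sinsub h1 h2
    rw [show y + 2 * δ₁ - (y + 2 * δ₂) = 2 * δ₁ - 2 * δ₂ by ring] at h3
    exact h3
  by_cases h0 : Real.sin (x - 0) = 0
  · have h1 : Real.sin (x - Real.pi / 3) ≠ 0 := by
      intro h
      have h2 := hpair 0 (Real.pi / 3) h0 h
      rw [show Real.pi / 3 - 0 = Real.pi / 3 by ring] at h2
      exact sin3ne h2
    have h2 : Real.sin (x - 2 * Real.pi / 3) ≠ 0 := by
      intro h
      have h2 := hpair 0 (2 * Real.pi / 3) h0 h
      rw [show 2 * Real.pi / 3 - 0 = 2 * Real.pi / 3 by ring] at h2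
      exact sin23ne h2
    have hy1 := hcon (Real.pi / 3) h1
    have hy2 := hcon (2 * Real.pi / 3) h2
    have h3 := hpair2 (2 * Real.pi / 3) (Real.pi / 3) hy2 hy1
    rw [show 2 * (2 * Real.pi / 3) - 2 * (Real.pi / 3) = 2 * Real.pi / 3 by ring] at h3
    exact sin23ne h3
  · have hy0 := hcon 0 h0
    by_cases h1 : Real.sin (x - Real.pi / 3) = 0
    · have h2 : Real.sin (x - 2 * Real.pi / 3) ≠ 0 := by
        intro h
        have h2 := hpair (Real.pi / 3) (2 * Real.pi / 3) h1 h
        rw [show 2 * Real.pi / 3 - Real.pi / 3 = Real.pi / 3 by ring] at h2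
        exact sin3ne h2
      have hy2 := hcon (2 * Real.pi / 3) h2
      have h3 := hpair2 (2 * Real.pi / 3) 0 hy2 hy0
      rw [show 2 * (2 * Real.pi / 3) - 2 * 0 = 4 * Real.pi / 3 by ring] at h3
      exact sin43ne h3
    · have hy1 := hcon (Real.pi / 3) h1
      have h3 := hpair2 (Real.pi / 3) 0 hy1 hy0
      rw [show 2 * (Real.pi / 3) - 2 * 0 = 2 * Real.pi / 3 by ring] at h3
      exact sin23ne h3

lemma reach (hsym : ∀ (σ : Equiv.Perm (Fin D)) (idx : Fin D → Fin 2), T (idx ∘ σ) = T idx)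
    {a : ℝ} (ha : a ≠ 0)
    (hmax : ∀ x : Fin D → Fin 2 → ℝ, (∀ j, isUnitVec (x j)) → tinner T (dtens x) ^ 2 ≤ a ^ 2)
    (j0 j1 : Fin D) (hj01 : j0 ≠ j1) :
    ∀ S : Finset (Fin D), j0 ∉ S → j1 ∉ S →
    ∀ θ : Fin D → ℝ, tinner T (dtens (vth θ)) = a → Real.sin (θ j0 - θ j1) ≠ 0 →
    ∀ tgt : Fin D → ℝ, ∃ θ' : Fin D → ℝ, tinner T (dtens (vth θ')) = a ∧
      Real.sin (θ' j0 - θ' j1) ≠ 0 ∧ ∀ l ∈ S, θ' l = tgt l := by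
  intro S
  induction S using Finset.induction_on with
  | empty =>
    intro _ _ θ h1 h2 tgt
    exact ⟨θ, h1, h2, by simp⟩
  | @insert l S hlS IH =>
    intro h0 h1 θ hFθ hsθ tgt
    have hl0 : l ≠ j0 := fun h => h0 (h ▸ Finset.mem_insert_self l S)
    have hl1 : l ≠ j1 := fun h => h1 (h ▸ Finset.mem_insert_self l S)
    have h0' : j0 ∉ S := fun h => h0 (Finset.mem_insert_of_mem h)
    have h1' : j1 ∉ S := fun h => h1 (Finset.mem_insert_of_mem h)
    obtain ⟨θ', hF', hs', htar⟩ := IH h0' h1' θ hFθ hsθ tgt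
    obtain ⟨δ, hδ1, hδ2⟩ := pick (θ' l - θ' j0) (θ' j0 - (tgt l - θ' l) - θ' j1)
    -- move 1 : along (j0, j1) by δ
    set θ1 : Fin D → ℝ :=
      Function.update (Function.update θ' j0 (θ' j0 + δ)) j1 (θ' j1 - δ) with hθ1
    have hF1 : tinner T (dtens (vth θ1)) = a :=
      (slice_core T hsym ha hmax θ' hj01 hF' hs').2 δ
    have hθ1j0 : θ1 j0 = θ' j0 + δ := by
      rw [hθ1, Function.update_of_ne hj01, Function.update_self]
    have hθ1j1 : θ1 j1 = θ' j1 - δ := by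
      rw [hθ1, Function.update_self]
    have hθ1l : θ1 l = θ' l := by
      rw [hθ1, Function.update_of_ne hl1, Function.update_of_ne hl0]
    -- move 2 : along (l, j0) by t
    set t : ℝ := tgt l - θ' l with ht
    have hC1 : Real.sin (θ1 l - θ1 j0) ≠ 0 := by
      rw [hθ1l, hθ1j0, show θ' l - (θ' j0 + δ) = θ' l - θ' j0 - δ by ring]
      exact hδ1
    set θ2 : Fin D → ℝ :=
      Function.update (Function.update θ1 l (θ1 l + t)) j0 (θ1 j0 - t) with hθ2
    have hF2 : tinner T (dtens (vth θ2)) = a :=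
      (slice_core T hsym ha hmax θ1 hl0 hF1 hC1).2 t
    have hθ2j0 : θ2 j0 = θ' j0 + δ - t := by
      rw [hθ2, Function.update_self, hθ1j0]
    have hθ2j1 : θ2 j1 = θ' j1 - δ := by
      rw [hθ2, Function.update_of_ne hj01.symm, Function.update_of_ne hl1.symm, hθ1j1]
    have hθ2l : θ2 l = tgt l := by
      rw [hθ2, Function.update_of_ne hl0, Function.update_self, hθ1l, ht]
      ring
    refine ⟨θ2, hF2, ?_, ?_⟩
    · rw [hθ2j0, hθ2j1,
        show θ' j0 + δ - t - (θ' j1 - δ) = θ' j0 - t - θ' j1 + 2 * δ by ring, ht]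
      exact hδ2
    · intro m hm
      rcases Finset.mem_insert.mp hm with rfl | hmS
      · exact hθ2l
      · have hm0 : m ≠ j0 := fun h => h0' (h ▸ hmS)
        have hm1 : m ≠ j1 := fun h => h1' (h ▸ hmS)
        have hml : m ≠ l := fun h => hlS (h ▸ hmS)
        rw [hθ2, Function.update_of_ne hm0, Function.update_of_ne hml, hθ1,
          Function.update_of_ne hm1, Function.update_of_ne hm0]
        exact htar m hmS

end Stmt15Aux

/-- If a nonzero symmetric tensor `T ∈ Sym(2, d)` (`d ≥ 2`) has a nonsymmetric best rank
one approximation, then every 2×2 slice `[t_{i,j,i₃,…,i_d}]` obtained by fixing the last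
`d - 2` indices has zero trace. -/
theorem stmt15 {d : ℕ} (T : (Fin (d + 2) → Fin 2) → ℝ) (hT : T ≠ 0)
    (hsym : ∀ (σ : Equiv.Perm (Fin (d + 2))) (idx : Fin (d + 2) → Fin 2),
      T (idx ∘ σ) = T idx)
    (hns : ∃ (a : ℝ) (u : Fin (d + 2) → Fin 2 → ℝ), (∀ j, isUnitVec (u j)) ∧
      (∀ (s : ℝ) (x : Fin (d + 2) → Fin 2 → ℝ), (∀ j, isUnitVec (x j)) →
        hsNorm (T - a • dtens u) ≤ hsNorm (T - s • dtens x)) ∧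
      ¬ ∃ (c : ℝ) (v : Fin 2 → ℝ), a • dtens u = c • dtens (fun _ : Fin (d + 2) => v)) :
    ∀ g : Fin (d + 2) → Fin 2,
      T (Function.update (Function.update g 0 0) 1 0) +
        T (Function.update (Function.update g 0 1) 1 1) = 0 := by
    classical
  intro g
  obtain ⟨a, u, hu, hopt, hnsym⟩ := hns
  obtain ⟨hainner, hmax⟩ := Stmt15Aux.opt T u hu hopt
  have ha : a ≠ 0 := by
    intro h0
    exact hnsym ⟨0, ![1, 0], by rw [h0, zero_smul, zero_smul]⟩
  choose θ0 hθc hθs using fun j => Stmt15Aux.exists_angle (u j) (hu j)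
  have hvth : Stmt15Aux.vth θ0 = u := by
    funext j i
    rcases Stmt15Aux.fin2cases i with rfl | rfl
    · exact hθc j
    · exact hθs j
  have hF0 : tinner T (dtens (Stmt15Aux.vth θ0)) = a := by rw [hvth]; exact hainner
  have hexists : ∃ j k : Fin (d + 2), Real.sin (θ0 j - θ0 k) ≠ 0 := by
    by_contra hc
    push_neg at hc
    apply hnsym
    refine ⟨a * ∏ j, Real.cos (θ0 j - θ0 0), u 0, ?_⟩
    have hcomp : ∀ (j : Fin (d + 2)) (i : Fin 2),
        u j i = Real.cos (θ0 j - θ0 0) * u 0 i := by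
      intro j i
      have hsj := hc j 0
      rcases Stmt15Aux.fin2cases i with rfl | rfl
      · rw [← hθc j, ← hθc 0]
        have h2 := Real.cos_add (θ0 j - θ0 0) (θ0 0)
        rw [hsj, show θ0 j - θ0 0 + θ0 0 = θ0 j by ring] at h2
        rw [h2]; ring
      · rw [← hθs j, ← hθs 0]
        have h2 := Real.sin_add (θ0 j - θ0 0) (θ0 0)
        rw [hsj, show θ0 j - θ0 0 + θ0 0 = θ0 j by ring] at h2
        rw [h2]; ring
    funext idx
    simp only [Pi.smul_apply, smul_eq_mul]
    rw [dtens, dtens]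
    rw [Finset.prod_congr rfl fun j _ => hcomp j (idx j)]
    rw [Finset.prod_mul_distrib]
    ring
  obtain ⟨j, k, hjk0⟩ := hexists
  have hjkne : j ≠ k := fun h => hjk0 (by rw [h, sub_self, Real.sin_zero])
  have h01 : (0 : Fin (d + 2)) ≠ 1 := by
    simp [Fin.ext_iff]
  -- build σ with σ 0 = j, σ 1 = k
  set τ : Equiv.Perm (Fin (d + 2)) := Equiv.swap 0 j with hτ
  set k' : Fin (d + 2) := τ k with hk'
  have hk'0 : k' ≠ 0 := by
    intro h
    have hτj : τ j = 0 := Equiv.swap_apply_right 0 j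
    have : τ k = τ j := by rw [← hk', h, hτj]
    exact hjkne (τ.injective this).symm
  set ρ : Equiv.Perm (Fin (d + 2)) := Equiv.swap 1 k' with hρ
  set σ : Equiv.Perm (Fin (d + 2)) := ρ.trans τ with hσ
  have hσ0 : σ 0 = j := by
    have hρ0 : ρ 0 = 0 := Equiv.swap_apply_of_ne_of_ne h01 (Ne.symm hk'0)
    show τ (ρ 0) = j
    rw [hρ0]
    exact Equiv.swap_apply_left 0 j
  have hσ1 : σ 1 = k := by
    show τ (ρ 1) = k
    rw [show ρ 1 = k' from Equiv.swap_apply_left 1 k', hk']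
    exact Equiv.swap_apply_self 0 j k
  set θ1 : Fin (d + 2) → ℝ := fun l => θ0 (σ l) with hθ1
  have hF1 : tinner T (dtens (Stmt15Aux.vth θ1)) = a := by
    have hve : Stmt15Aux.vth θ1 = fun l => Stmt15Aux.vth θ0 (σ l) := rfl
    rw [hve, Stmt15Aux.perm T hsym σ (Stmt15Aux.vth θ0)]
    exact hF0
  have hs1 : Real.sin (θ1 0 - θ1 1) ≠ 0 := by
    show Real.sin (θ0 (σ 0) - θ0 (σ 1)) ≠ 0
    rw [hσ0, hσ1]
    exact hjk0
  set tgt : Fin (d + 2) → ℝ := fun l => if g l = 0 then 0 else Real.pi / 2 with htgt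
  obtain ⟨θ2, hF2, hs2, htar⟩ := Stmt15Aux.reach T hsym ha hmax 0 1 h01
    (Finset.univ \ {0, 1}) (by simp) (by simp) θ1 hF1 hs1 tgt
  have hXl : ∀ l : Fin (d + 2), l ≠ 0 → l ≠ 1 →
      Stmt15Aux.vth θ2 l = Stmt15Aux.bv (g l) := by
    intro l hl0 hl1
    have hθ2l : θ2 l = tgt l := htar l (by simp [hl0, hl1])
    funext i
    rcases Stmt15Aux.fin2cases (g l) with h | h <;> rcases Stmt15Aux.fin2cases i with rfl | rfl <;>
      simp [Stmt15Aux.vth, Stmt15Aux.bv, hθ2l, htgt, h]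
  have hcore := (Stmt15Aux.slice_core T hsym ha hmax θ2 h01 hF2 hs2).1
  have hfam : ∀ i i' : Fin 2,
      Function.update (Function.update (Stmt15Aux.vth θ2) 0 (Stmt15Aux.bv i)) 1 (Stmt15Aux.bv i')
        = fun l => Stmt15Aux.bv ((Function.update (Function.update g 0 i) 1 i') l) := by
    intro i i'
    funext l
    rcases eq_or_ne l 1 with rfl | hl1
    · rw [Function.update_self, Function.update_self]
    · rcases eq_or_ne l 0 with rfl | hl0
      · rw [Function.update_of_ne h01, Function.update_self, Function.update_of_ne h01,
          Function.update_self]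
      · rw [Function.update_of_ne hl1, Function.update_of_ne hl0, Function.update_of_ne hl1,
          Function.update_of_ne hl0]
        exact hXl l hl0 hl1
  rw [hfam 0 0, hfam 1 1, Stmt15Aux.basis, Stmt15Aux.basis] at hcore
  exact hcore
end
end

section
/- Let T ∈ ℝ^{n₁×…×n_d} be nonzero with symmetry decomposition [d] = α₁ ∪ … ∪ α_m (T is symmetric with respect to each α_j). Then there exists a best rank one approximation a·(u₁⊗…⊗u_d) of T such that u_p = u_q whenever p,q belong to the same block α_j. -/
noncomputable section

/-- The multi-index obtained from `idx` by interchanging the entries in positions `p`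
and `q` (which have equal dimensions). -/
def swapAt {d : ℕ} {n : Fin d → ℕ} (p q : Fin d) (hpq : n p = n q)
    (idx : ∀ j, Fin (n j)) : ∀ j, Fin (n j) :=
  fun j =>
    if h : j = p then Fin.cast (show n q = n j by rw [h, hpq]) (idx q)
    else if h' : j = q then Fin.cast (show n p = n j by rw [h', hpq]) (idx p)
    else idx j

/-! ### Auxiliary lemmas -/

lemma fin_cast_self {k : ℕ} (h : k = k) (i : Fin k) : Fin.cast h i = i := Fin.ext rfl

lemma fin_cast_cast {n₁ n₂ n₃ : ℕ} (e₁ : n₁ = n₂) (e₂ : n₂ = n₃) (i : Fin n₁) :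
    Fin.cast e₂ (Fin.cast e₁ i) = Fin.cast (e₁.trans e₂) i := Fin.ext rfl

lemma sum_cast {n₁ n₂ : ℕ} (e : n₁ = n₂) (F : Fin n₂ → ℝ) :
    ∑ k : Fin n₁, F (Fin.cast e k) = ∑ i, F i := by
  subst e; simp [fin_cast_self]

lemma sum_reindex {n₁ n₂ : ℕ} (e : n₁ = n₂) (F : Fin n₁ → ℝ) (G : Fin n₂ → ℝ)
    (hFG : ∀ k, F k = G (Fin.cast e k)) : ∑ k, F k = ∑ i, G i :=
  Fintype.sum_equiv (finCongr e) F G (fun k => by rw [hFG k]; rfl)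

lemma sum_sub_sq {N : Type*} [Fintype N] (f g : N → ℝ) :
    ∑ i, (f i - g i) ^ 2 =
      (∑ i, f i ^ 2) - 2 * (∑ i, f i * g i) + ∑ i, g i ^ 2 := by
  rw [Finset.mul_sum, ← Finset.sum_sub_distrib, ← Finset.sum_add_distrib]
  apply Finset.sum_congr rfl; intros; ring

lemma sum_add_sq {N : Type*} [Fintype N] (f g : N → ℝ) :
    ∑ i, (f i + g i) ^ 2 =
      (∑ i, f i ^ 2) + 2 * (∑ i, f i * g i) + ∑ i, g i ^ 2 := by
  rw [Finset.mul_sum, ← Finset.sum_add_distrib, ← Finset.sum_add_distrib]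
  apply Finset.sum_congr rfl; intros; ring

lemma delta_unit {k : ℕ} (i0 : Fin k) : isUnitVec (fun i => if i = i0 then (1:ℝ) else 0) := by
  simp [isUnitVec, apply_ite (· ^ 2 : ℝ → ℝ)]

/-- The tensor pairing as a multilinear map. -/
def cml {d : ℕ} {n : Fin d → ℕ} (T : (∀ j, Fin (n j)) → ℝ) :
    MultilinearMap ℝ (fun j => Fin (n j) → ℝ) ℝ :=
  ∑ idx : ∀ j, Fin (n j), T idx •
    (MultilinearMap.mkPiAlgebra ℝ (Fin d) ℝ).compLinearMap (fun j => LinearMap.proj (idx j))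

lemma cml_apply {d : ℕ} {n : Fin d → ℕ} (T : (∀ j, Fin (n j)) → ℝ)
    (x : ∀ j, Fin (n j) → ℝ) : cml T x = tinner T (dtens x) := by
  simp [cml, tinner, dtens]

lemma cfun_continuous {d : ℕ} {n : Fin d → ℕ} (T : (∀ j, Fin (n j)) → ℝ) :
    Continuous fun x : ∀ j, Fin (n j) → ℝ => tinner T (dtens x) := by
  unfold tinner dtens
  exact continuous_finset_sum _ fun idx _ => continuous_const.mul <|
    continuous_finset_prod _ fun j _ => (continuous_apply (idx j)).comp (continuous_apply j)

lemma dtens_sq {d : ℕ} {n : Fin d → ℕ} (x : ∀ j, Fin (n j) → ℝ)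
    (hx : ∀ j, isUnitVec (x j)) : ∑ idx, dtens x idx ^ 2 = 1 := by
  have h : ∀ idx : ∀ j, Fin (n j), dtens x idx ^ 2 = ∏ j, x j (idx j) ^ 2 := by
    intro idx; rw [dtens, ← Finset.prod_pow]
  rw [Finset.sum_congr rfl fun idx _ => h idx,
    ← Fintype.prod_sum (fun j (i : Fin (n j)) => x j i ^ 2)]
  simp only [show ∀ j, ∑ i, x j i ^ 2 = 1 from hx]
  simp

lemma unit_compact {k : ℕ} : IsCompact {v : Fin k → ℝ | isUnitVec v} := by
  apply Metric.isCompact_of_isClosed_isBounded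
  · exact isClosed_eq (by continuity) continuous_const
  · rw [Metric.isBounded_iff_subset_closedBall 0]
    refine ⟨1, fun v hv => ?_⟩
    simp only [Metric.mem_closedBall, dist_zero_right]
    rw [pi_norm_le_iff_of_nonneg zero_le_one]
    intro i
    have h1 : v i ^ 2 ≤ 1 := by
      rw [← hv]
      exact Finset.single_le_sum (f := fun i => v i ^ 2) (fun j _ => sq_nonneg _)
        (Finset.mem_univ i)
    rw [Real.norm_eq_abs]
    rcases abs_cases (v i) with ⟨h2, _⟩ | ⟨h2, _⟩ <;> nlinarith

/-- Representation of a bounded linear functional attaining its norm. -/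
lemma dual_rep {N : ℕ} (L : (Fin N → ℝ) → ℝ) (C : ℝ)
    (hadd : ∀ y z, L (y + z) = L y + L z)
    (hsmul : ∀ (r : ℝ) y, L (r • y) = r * L y)
    (hbound : ∀ y, isUnitVec y → (L y) ^ 2 ≤ C ^ 2)
    (z : Fin N → ℝ) (hz : isUnitVec z) (hLz : L z = C) :
    ∀ y, L y = C * ∑ i, y i * z i := by
  set l : Fin N → ℝ := fun i => L (Pi.single i 1) with hl
  have φdef : ∀ y, L y = ∑ i, y i * l i := by
    intro y
    have hy : y = ∑ i, y i • (Pi.single i 1 : Fin N → ℝ) := by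
      funext j
      simp [Finset.sum_apply, Pi.single_apply]
    have φ : (Fin N → ℝ) →+ ℝ := AddMonoidHom.mk' L hadd
    calc L y = L (∑ i, y i • (Pi.single i 1 : Fin N → ℝ)) := by rw [← hy]
    _ = ∑ i, L (y i • (Pi.single i 1 : Fin N → ℝ)) :=
        map_sum (AddMonoidHom.mk' L hadd) _ _
    _ = ∑ i, y i * l i := by
        apply Finset.sum_congr rfl; intro i _; rw [hsmul]
  have hs : ∑ i, l i ^ 2 ≤ C ^ 2 := by
    rcases eq_or_lt_of_le (Finset.sum_nonneg fun i _ => sq_nonneg (l i)) with h0 | h0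
    · nlinarith [sq_nonneg C]
    · set s := ∑ i, l i ^ 2 with hsdef
      have hsq : Real.sqrt s ^ 2 = s := Real.sq_sqrt h0.le
      have hsqpos : 0 < Real.sqrt s := Real.sqrt_pos.mpr h0
      have hyunit : isUnitVec ((Real.sqrt s)⁻¹ • l) := by
        unfold isUnitVec
        have : ∀ i, ((Real.sqrt s)⁻¹ • l) i ^ 2 = (Real.sqrt s)⁻¹ ^ 2 * l i ^ 2 := by
          intro i; simp [mul_pow]
        rw [Finset.sum_congr rfl fun i _ => this i, ← Finset.mul_sum, ← hsdef]
        field_simp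
        exact hsq.symm
      have := hbound _ hyunit
      rw [hsmul, φdef] at this
      have hll : ∑ i, l i * l i = s := by
        rw [hsdef]; apply Finset.sum_congr rfl; intros; ring
      rw [hll] at this
      calc s = ((Real.sqrt s)⁻¹ * s) ^ 2 := by
              rw [mul_pow, inv_pow, hsq]
              field_simp
      _ ≤ C ^ 2 := this
  have hzl : ∑ i, z i * l i = C := by rw [← φdef]; exact hLz
  have hkey : ∑ i, (l i - C * z i) ^ 2 ≤ 0 := by
    have e1 : ∑ i, (l i - C * z i) ^ 2
        = (∑ i, l i ^ 2) - 2 * C * (∑ i, z i * l i) + C ^ 2 * ∑ i, z i ^ 2 := by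
      rw [Finset.mul_sum, Finset.mul_sum, ← Finset.sum_sub_distrib, ← Finset.sum_add_distrib]
      apply Finset.sum_congr rfl; intros; ring
    rw [e1, hzl, hz]
    nlinarith
  have hleq : ∀ i, l i = C * z i := by
    intro i
    have h0 : ∀ i ∈ Finset.univ, (0:ℝ) ≤ (l i - C * z i) ^ 2 := fun i _ => sq_nonneg _
    have := (Finset.sum_eq_zero_iff_of_nonneg h0).mp
      (le_antisymm hkey (Finset.sum_nonneg h0)) i (Finset.mem_univ i)
    have := pow_eq_zero_iff (n := 2) (by norm_num) |>.mp this
    linarith [this]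
  intro y
  rw [φdef, Finset.mul_sum]
  apply Finset.sum_congr rfl; intro i _
  rw [hleq]; ring



/-! ### swapAt lemmas -/

lemma swapAt_p {d : ℕ} {n : Fin d → ℕ} (p q : Fin d) (e : n p = n q)
    (idx : ∀ j, Fin (n j)) : swapAt p q e idx p = Fin.cast e.symm (idx q) := by
  simp [swapAt]

lemma swapAt_q {d : ℕ} {n : Fin d → ℕ} {p q : Fin d} (hpq : p ≠ q) (e : n p = n q)
    (idx : ∀ j, Fin (n j)) : swapAt p q e idx q = Fin.cast e (idx p) := by
  simp [swapAt, hpq.symm]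

lemma swapAt_other {d : ℕ} {n : Fin d → ℕ} {p q j : Fin d} (hjp : j ≠ p) (hjq : j ≠ q)
    (e : n p = n q) (idx : ∀ j, Fin (n j)) : swapAt p q e idx j = idx j := by
  simp [swapAt, hjp, hjq]

lemma swapAt_invol {d : ℕ} {n : Fin d → ℕ} {p q : Fin d} (hpq : p ≠ q) (e : n p = n q) :
    Function.Involutive (swapAt p q e) := by
  intro idx
  funext j
  by_cases hjp : j = p
  · subst hjp
    rw [swapAt_p, swapAt_q hpq, fin_cast_cast, fin_cast_self]
  · by_cases hjq : j = q
    · subst hjq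
      rw [swapAt_q hpq, swapAt_p, fin_cast_cast, fin_cast_self]
    · rw [swapAt_other hjp hjq, swapAt_other hjp hjq]

/-! ### The two-slot form Kf -/

def Kf {d : ℕ} {n : Fin d → ℕ} (T : (∀ j, Fin (n j)) → ℝ) (u : ∀ j, Fin (n j) → ℝ)
    (p q : Fin d) (e : n p = n q) (v w : Fin (n p) → ℝ) : ℝ :=
  tinner T (dtens (Function.update (Function.update u p v) q
    (fun i => w (Fin.cast e.symm i))))

section KfLemmas

variable {d : ℕ} {n : Fin d → ℕ} (T : (∀ j, Fin (n j)) → ℝ) (u : ∀ j, Fin (n j) → ℝ)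
  {p q : Fin d} (e : n p = n q)

lemma Kf_add_left (hpq : p ≠ q) (v v' w : Fin (n p) → ℝ) :
    Kf T u p q e (v + v') w = Kf T u p q e v w + Kf T u p q e v' w := by
  unfold Kf
  rw [← cml_apply, ← cml_apply, ← cml_apply,
    Function.update_comm hpq, Function.update_comm hpq, Function.update_comm hpq]
  exact MultilinearMap.map_update_add _ _ _ _ _

lemma Kf_smul_left (hpq : p ≠ q) (r : ℝ) (v w : Fin (n p) → ℝ) :
    Kf T u p q e (r • v) w = r * Kf T u p q e v w := by
  unfold Kf
  rw [← cml_apply, ← cml_apply,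
    Function.update_comm hpq, Function.update_comm hpq]
  rw [MultilinearMap.map_update_smul]
  rfl

lemma Kf_add_right (v w w' : Fin (n p) → ℝ) :
    Kf T u p q e v (w + w') = Kf T u p q e v w + Kf T u p q e v w' := by
  unfold Kf
  rw [← cml_apply, ← cml_apply, ← cml_apply]
  exact MultilinearMap.map_update_add (cml T) (Function.update u p v) q
    (fun i => w (Fin.cast e.symm i)) (fun i => w' (Fin.cast e.symm i))

lemma Kf_smul_right (r : ℝ) (v w : Fin (n p) → ℝ) :
    Kf T u p q e v (r • w) = r * Kf T u p q e v w := by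
  unfold Kf
  rw [← cml_apply, ← cml_apply]
  rw [show (fun i => (r • w) (Fin.cast e.symm i)) =
    r • (fun i => w (Fin.cast e.symm i)) from rfl]
  rw [MultilinearMap.map_update_smul]
  rfl

end KfLemmas

lemma Kf_sym {d m : ℕ} {n : Fin d → ℕ} (T : (∀ j, Fin (n j)) → ℝ)
    (c : Fin d → Fin m) (hdim : ∀ p q, c p = c q → n p = n q)
    (hsym : ∀ (p q : Fin d) (h : c p = c q) (idx : ∀ j, Fin (n j)),
      T (swapAt p q (hdim p q h) idx) = T idx)
    (u : ∀ j, Fin (n j) → ℝ) {p q : Fin d} (h : c p = c q) (hpq : p ≠ q)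
    (v w : Fin (n p) → ℝ) :
    Kf T u p q (hdim p q h) v w = Kf T u p q (hdim p q h) w v := by
  unfold Kf tinner dtens
  apply Fintype.sum_equiv (swapAt_invol hpq (hdim p q h)).toPerm
  intro idx
  simp only [Function.Involutive.coe_toPerm]
  rw [hsym p q h idx]
  congr 1
  apply Fintype.prod_equiv (Equiv.swap p q)
  intro j
  by_cases hjp : j = p
  · subst hjp
    rw [Equiv.swap_apply_left, swapAt_q hpq,
      Function.update_of_ne hpq, Function.update_self, Function.update_self,
      fin_cast_cast, fin_cast_self]
  · by_cases hjq : j = q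
    · subst hjq
      rw [Equiv.swap_apply_right, swapAt_p,
        Function.update_self, Function.update_of_ne hpq, Function.update_self]
    · rw [Equiv.swap_apply_of_ne_of_ne hjp hjq, swapAt_other hjp hjq,
        Function.update_of_ne hjq, Function.update_of_ne hjp,
        Function.update_of_ne hjq, Function.update_of_ne hjp]

lemma dot_self_unit {k : ℕ} {v : Fin k → ℝ} (hv : isUnitVec v) : ∑ i, v i * v i = 1 := by
  rw [← hv]; exact Finset.sum_congr rfl fun i _ => (sq (v i)).symm

section Core

variable {d m : ℕ} {n : Fin d → ℕ}

/-- The inner product of slot `p'` with slot `q'`, when in the same block. -/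
def pairF (c : Fin d → Fin m) (hdim : ∀ p q, c p = c q → n p = n q)
    (p' q' : Fin d) (x : ∀ j, Fin (n j) → ℝ) : ℝ :=
  if h : c p' = c q' then ∑ i, x p' i * x q' (Fin.cast (hdim p' q' h) i) else 0

def gfun (c : Fin d → Fin m) (hdim : ∀ p q, c p = c q → n p = n q)
    (x : ∀ j, Fin (n j) → ℝ) : ℝ :=
  ∑ p', ∑ q', pairF c hdim p' q' x

lemma gfun_continuous (c : Fin d → Fin m) (hdim : ∀ p q, c p = c q → n p = n q) :
    Continuous (gfun c hdim) := by
  refine continuous_finset_sum _ fun p' _ => continuous_finset_sum _ fun q' _ => ?_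
  unfold pairF
  by_cases h : c p' = c q'
  · simp only [dif_pos h]
    exact continuous_finset_sum _ fun i _ =>
      ((continuous_apply i).comp (continuous_apply p')).fun_mul
        ((continuous_apply _).comp (continuous_apply q'))
  · simp only [dif_neg h]; exact continuous_const


lemma unit_neg {k : ℕ} {v : Fin k → ℝ} (hv : isUnitVec v) : isUnitVec (-v) := by
  unfold isUnitVec at *
  simpa using hv

lemma pairF_pos {d m : ℕ} {n : Fin d → ℕ} (c : Fin d → Fin m)
    (hdim : ∀ p q, c p = c q → n p = n q) (p' q' : Fin d) (hcc : c p' = c q')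
    (x : ∀ j, Fin (n j) → ℝ) :
    pairF c hdim p' q' x = ∑ i, x p' i * x q' (Fin.cast (hdim p' q' hcc) i) := dif_pos hcc

lemma pairF_neg {d m : ℕ} {n : Fin d → ℕ} (c : Fin d → Fin m)
    (hdim : ∀ p q, c p = c q → n p = n q) {p' q' : Fin d} (hcc : ¬ c p' = c q')
    (x : ∀ j, Fin (n j) → ℝ) :
    pairF c hdim p' q' x = 0 := dif_neg hcc

set_option maxHeartbeats 2000000 in
lemma step_exchange {d m : ℕ} {n : Fin d → ℕ} (T : (∀ j, Fin (n j)) → ℝ)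
    (c : Fin d → Fin m) (hdim : ∀ p q, c p = c q → n p = n q)
    (hsym : ∀ (p q : Fin d) (h : c p = c q) (idx : ∀ j, Fin (n j)),
      T (swapAt p q (hdim p q h) idx) = T idx)
    (u : ∀ j, Fin (n j) → ℝ) (huU : ∀ j, isUnitVec (u j))
    (hmax2 : ∀ x, (∀ j, isUnitVec (x j)) →
      tinner T (dtens x) ^ 2 ≤ tinner T (dtens u) ^ 2)
    (hgmax : ∀ x, (∀ j, isUnitVec (x j)) →
      tinner T (dtens x) ^ 2 = tinner T (dtens u) ^ 2 →
      gfun c hdim x ≤ gfun c hdim u)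
    {p q : Fin d} (h : c p = c q) (hpq : p ≠ q) :
    ∀ k, u q (Fin.cast (hdim p q h) k) = u p k := by
  classical
  have e : n p = n q := hdim p q h
  set b : Fin (n p) → ℝ := fun k => u q (Fin.cast e k) with hb
  set t : ℝ := ∑ k, u p k * b k with ht
  set C : ℝ := tinner T (dtens u) with hC
  have hqp : q ≠ p := fun hh => hpq hh.symm
  have hu1 : ∑ i, u p i ^ 2 = 1 := huU p
  have hbunit : isUnitVec b :=
    (sum_reindex e (fun k => b k ^ 2) (fun i => u q i ^ 2)
      (fun k => by simp only [hb])).trans (huU q)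
  have hb1 : ∑ i, b i ^ 2 = 1 := hbunit
  -- update facts
  have hupdU : ∀ v w : Fin (n p) → ℝ, isUnitVec v → isUnitVec w → ∀ j,
      isUnitVec ((Function.update (Function.update u p v) q
        (fun i => w (Fin.cast e.symm i))) j) := by
    intro v w hv hw j
    by_cases hjq : j = q
    · subst hjq
      rw [Function.update_self]
      exact (sum_reindex e.symm (fun i => w (Fin.cast e.symm i) ^ 2)
        (fun k => w k ^ 2) (fun i => rfl)).trans hw
    · by_cases hjp : j = p
      · subst hjp
        rw [Function.update_of_ne hjq, Function.update_self]
        exact hv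
      · rw [Function.update_of_ne hjq, Function.update_of_ne hjp]
        exact huU j
  have hupdab : Function.update (Function.update u p (u p)) q
      (fun i => b (Fin.cast e.symm i)) = u := by
    funext j
    by_cases hjq : j = q
    · subst hjq
      rw [Function.update_self]
      funext i
      simp only [hb, fin_cast_cast, fin_cast_self]
    · by_cases hjp : j = p
      · subst hjp
        rw [Function.update_of_ne hjq, Function.update_self]
      · rw [Function.update_of_ne hjq, Function.update_of_ne hjp]
  have hKab : Kf T u p q e (u p) b = C := by
    rw [Kf, hupdab, hC]
  have hKsym : ∀ v w, Kf T u p q e v w = Kf T u p q e w v := fun v w =>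
    Kf_sym T c hdim hsym u h hpq v w
  have hKba : Kf T u p q e b (u p) = C := (hKsym b (u p)).trans hKab
  have hbound1 : ∀ y, isUnitVec y → Kf T u p q e y b ^ 2 ≤ C ^ 2 := fun y hy =>
    hmax2 _ (hupdU y b hy hbunit)
  have hbound2 : ∀ y, isUnitVec y → Kf T u p q e y (u p) ^ 2 ≤ C ^ 2 := fun y hy =>
    hmax2 _ (hupdU y (u p) hy (huU p))
  have HB : ∀ y, Kf T u p q e y b = C * ∑ i, y i * u p i :=
    dual_rep (fun y => Kf T u p q e y b) C
      (fun y z => Kf_add_left T u e hpq y z b)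
      (fun r y => Kf_smul_left T u e hpq r y b)
      hbound1 (u p) (huU p) hKab
  have HA : ∀ y, Kf T u p q e y (u p) = C * ∑ i, y i * b i :=
    dual_rep (fun y => Kf T u p q e y (u p)) C
      (fun y z => Kf_add_left T u e hpq y z (u p))
      (fun r y => Kf_smul_left T u e hpq r y (u p))
      hbound2 b hbunit hKba
  have hKaa : Kf T u p q e (u p) (u p) = C * t := by rw [HA (u p), ht]
  have hKbb : Kf T u p q e b b = C * t := by
    rw [HB b, show (∑ i, b i * u p i) = ∑ i, u p i * b i from
      Finset.sum_congr rfl fun i _ => mul_comm _ _, ← ht]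
  have hsub : ∑ i, (u p i - b i) ^ 2 = 2 - 2 * t := by
    rw [sum_sub_sq, hu1, hb1, ← ht]; ring
  have hadd : ∑ i, (u p i + b i) ^ 2 = 2 + 2 * t := by
    rw [sum_add_sq, hu1, hb1, ← ht]; ring
  have htle : t ≤ 1 := by
    nlinarith [Finset.sum_nonneg (fun i (_ : i ∈ Finset.univ) => sq_nonneg (u p i - b i)), hsub]
  have htge : -1 ≤ t := by
    nlinarith [Finset.sum_nonneg (fun i (_ : i ∈ Finset.univ) => sq_nonneg (u p i + b i)), hadd]
  -- the beta functionals
  set R : Finset (Fin d) := (Finset.univ.erase p).erase q with hR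
  set β : Fin d → (Fin (n p) → ℝ) → ℝ := fun r y =>
    if hr : c p = c r then ∑ i, y i * u r (Fin.cast (hdim p r hr) i) else 0 with hβ
  have hβadd : ∀ r y z, β r (y + z) = β r y + β r z := by
    intro r y z
    simp only [hβ]
    by_cases hr : c p = c r
    · simp only [dif_pos hr, ← Finset.sum_add_distrib]
      apply Finset.sum_congr rfl; intros; simp [add_mul]
    · simp [dif_neg hr]
  have hβsmul : ∀ r (s : ℝ) y, β r (s • y) = s * β r y := by
    intro r s y
    simp only [hβ]
    by_cases hr : c p = c r
    · simp only [dif_pos hr, Finset.mul_sum]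
      apply Finset.sum_congr rfl; intros; simp; ring
    · simp [dif_neg hr]
  have hβneg : ∀ r y, β r (-y) = - β r y := by
    intro r y
    rw [show -y = (-1 : ℝ) • y from by funext i; simp, hβsmul]; ring
  have hsplit : ∀ F : Fin d → ℝ, ∑ j, F j = F p + (F q + ∑ r ∈ R, F r) := by
    intro F
    rw [hR, ← Finset.add_sum_erase _ F (Finset.mem_univ p),
      ← Finset.add_sum_erase _ F (Finset.mem_erase.mpr ⟨hqp, Finset.mem_univ q⟩)]
  have hrmem : ∀ r ∈ R, r ≠ p ∧ r ≠ q := by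
    intro r hr
    rw [hR] at hr
    simp only [Finset.mem_erase, Finset.mem_univ, and_true] at hr
    exact ⟨hr.2, hr.1⟩
  -- main claim : t = 1
  have ht1 : t = 1 := by
    by_contra htne
    have htlt : t < 1 := lt_of_le_of_ne htle htne
    -- find the replacement vector v
    obtain ⟨v, hvu, hvsq, hvcross⟩ : ∃ v : Fin (n p) → ℝ, isUnitVec v ∧
        (Kf T u p q e v v) ^ 2 = C ^ 2 ∧
        2 * ((∑ r ∈ R, β r (u p)) + ∑ r ∈ R, β r b) ≤ 4 * ∑ r ∈ R, β r v := by
      rcases eq_or_lt_of_le htge with htm | htm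
      · -- t = -1, so b = -u p
        have habz : ∑ i, (u p i + b i) ^ 2 = 0 := by rw [hadd, ← htm]; ring
        have hbneg : b = -u p := by
          funext i
          have h0 : ∀ i ∈ Finset.univ, (0:ℝ) ≤ (u p i + b i) ^ 2 := fun i _ => sq_nonneg _
          have h1 := (Finset.sum_eq_zero_iff_of_nonneg h0).mp habz i (Finset.mem_univ i)
          have h2 := pow_eq_zero_iff (n := 2) (by norm_num) |>.mp h1
          simp only [Pi.neg_apply]
          linarith
        have hβb : ∀ r, β r b = - β r (u p) := by
          intro r; rw [hbneg, hβneg]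
        have hcancel : (∑ r ∈ R, β r (u p)) + ∑ r ∈ R, β r b = 0 := by
          rw [Finset.sum_congr rfl fun r _ => hβb r, Finset.sum_neg_distrib]
          ring
        have hKsq : (Kf T u p q e (u p) (u p)) ^ 2 = C ^ 2 := by
          rw [hKaa, ← htm]; ring
        by_cases hsgn : 0 ≤ ∑ r ∈ R, β r (u p)
        · exact ⟨u p, huU p, hKsq, by rw [hcancel]; linarith⟩
        · refine ⟨-u p, unit_neg (huU p), ?_, ?_⟩
          · rw [show -u p = (-1 : ℝ) • u p from by funext i; simp,
              Kf_smul_left T u e hpq, Kf_smul_right, hKaa, ← htm]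
            ring
          · rw [hcancel, Finset.sum_congr rfl fun r (_ : r ∈ R) => hβneg r (u p),
              Finset.sum_neg_distrib]
            linarith [lt_of_not_ge hsgn]
      · -- -1 < t
        have hpos : 0 < 2 + 2 * t := by linarith
        have hsqrtpos : 0 < Real.sqrt (2 + 2 * t) := Real.sqrt_pos.mpr hpos
        have hsq : Real.sqrt (2 + 2 * t) ^ 2 = 2 + 2 * t := Real.sq_sqrt hpos.le
        set lam : ℝ := (Real.sqrt (2 + 2 * t))⁻¹ with hlam
        have hlampos : 0 < lam := inv_pos.mpr hsqrtpos
        have hlam2 : lam ^ 2 = (2 + 2 * t)⁻¹ := by rw [hlam, inv_pow, hsq]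
        have hlamprod : lam * Real.sqrt (2 + 2 * t) = 1 := inv_mul_cancel₀ hsqrtpos.ne'
        have h24 : Real.sqrt (2 + 2 * t) ≤ 2 := by
          have h4 : (2:ℝ) + 2 * t ≤ 4 := by linarith
          calc Real.sqrt (2 + 2 * t) ≤ Real.sqrt 4 := Real.sqrt_le_sqrt h4
          _ = 2 := by
              rw [show (4:ℝ) = 2 ^ 2 by norm_num, Real.sqrt_sq (by norm_num : (0:ℝ) ≤ 2)]
        have hlamhalf : 1 / 2 ≤ lam := by
          have hnn : 0 ≤ lam * (2 - Real.sqrt (2 + 2 * t)) :=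
            mul_nonneg hlampos.le (by linarith)
          nlinarith [hlamprod]
        set w : Fin (n p) → ℝ := lam • (u p + b) with hw
        have hwunit : isUnitVec w := by
          unfold isUnitVec
          have hterm : ∀ i ∈ Finset.univ, w i ^ 2 = lam ^ 2 * (u p i + b i) ^ 2 := by
            intro i _; rw [hw]; simp [mul_pow]
          rw [Finset.sum_congr rfl hterm, ← Finset.mul_sum, hadd, hlam2]
          field_simp
          exact div_self (by linarith)
        have hKw : Kf T u p q e w w = C := by
          have hone : lam ^ 2 * (2 + 2 * t) = 1 := by rw [hlam2]; field_simp; exact div_self (by linarith)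
          rw [hw, Kf_smul_left T u e hpq, Kf_smul_right, Kf_add_left T u e hpq,
            Kf_add_right, Kf_add_right, hKaa, hKab, hKba, hKbb]
          linear_combination C * hone
        have hβw : ∑ r ∈ R, β r w = lam * ((∑ r ∈ R, β r (u p)) + ∑ r ∈ R, β r b) := by
          have hterm : ∀ r ∈ R, β r w = lam * (β r (u p) + β r b) := by
            intro r _; rw [hw, hβsmul, hβadd]
          rw [Finset.sum_congr rfl hterm, ← Finset.mul_sum, Finset.sum_add_distrib]
        by_cases hsgn : 0 ≤ (∑ r ∈ R, β r (u p)) + ∑ r ∈ R, β r b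
        · refine ⟨w, hwunit, by rw [hKw], ?_⟩
          rw [hβw]
          nlinarith [hlamhalf, hsgn]
        · refine ⟨-w, unit_neg hwunit, ?_, ?_⟩
          · rw [show -w = (-1 : ℝ) • w from by funext i; simp,
              Kf_smul_left T u e hpq, Kf_smul_right, hKw]
            ring
          · rw [Finset.sum_congr rfl fun r (_ : r ∈ R) => hβneg r w,
              Finset.sum_neg_distrib, hβw]
            nlinarith [mul_pos hlampos (neg_pos.mpr (lt_of_not_ge hsgn)),
              lt_of_not_ge hsgn]
    -- the modified tuple
    set x' : ∀ j, Fin (n j) → ℝ := Function.update (Function.update u p v) q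
      (fun i => v (Fin.cast e.symm i)) with hx'
    have hx'U : ∀ j, isUnitVec (x' j) := hupdU v v hvu hvu
    have hx'sq : tinner T (dtens x') ^ 2 = C ^ 2 := hvsq
    have hgle := hgmax x' hx'U hx'sq
    have hx'p : x' p = v := by
      rw [hx', Function.update_of_ne hpq, Function.update_self]
    have hx'q : x' q = fun i => v (Fin.cast e.symm i) := by
      rw [hx', Function.update_self]
    have hx'r : ∀ r, r ≠ p → r ≠ q → x' r = u r := by
      intro r hrp hrq
      rw [hx', Function.update_of_ne hrq, Function.update_of_ne hrp]
    -- row p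
    have h1 : pairF c hdim p p x' - pairF c hdim p p u = 0 := by
      rw [pairF_pos c hdim p p rfl x', pairF_pos c hdim p p rfl u]
      have e1 : ∑ i, x' p i * x' p (Fin.cast (hdim p p rfl) i) = ∑ i, v i * v i :=
        Finset.sum_congr rfl fun i _ => by rw [hx'p]; simp [fin_cast_self]
      have e2 : ∑ i, u p i * u p (Fin.cast (hdim p p rfl) i) = ∑ i, u p i * u p i :=
        Finset.sum_congr rfl fun i _ => by simp [fin_cast_self]
      rw [e1, e2, dot_self_unit hvu, dot_self_unit (huU p)]
      ring
    have h2 : pairF c hdim p q x' - pairF c hdim p q u = 1 - t := by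
      have hxx : pairF c hdim p q x' = 1 := by
        rw [pairF_pos c hdim p q h x']
        have e1 : ∑ i, x' p i * x' q (Fin.cast (hdim p q h) i) = ∑ i, v i * v i :=
          Finset.sum_congr rfl fun i _ => by
            rw [hx'p, hx'q]; simp [fin_cast_cast, fin_cast_self]
        rw [e1, dot_self_unit hvu]
      have huu : pairF c hdim p q u = t := by
        rw [pairF_pos c hdim p q h u, ht]
      rw [hxx, huu]
    have h3 : ∀ r ∈ R, pairF c hdim p r x' - pairF c hdim p r u = β r v - β r (u p) := by
      intro r hr
      obtain ⟨hrp, hrq⟩ := hrmem r hr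
      by_cases hcr : c p = c r
      · have hxx : pairF c hdim p r x' = β r v := by
          rw [pairF_pos c hdim p r hcr x', hx'r r hrp hrq]
          simp only [hβ, dif_pos hcr]
          exact Finset.sum_congr rfl fun i _ => by rw [hx'p]
        have huu : pairF c hdim p r u = β r (u p) := by
          rw [pairF_pos c hdim p r hcr u]
          simp only [hβ, dif_pos hcr]
        rw [hxx, huu]
      · rw [pairF_neg c hdim hcr x', pairF_neg c hdim hcr u]
        simp only [hβ, dif_neg hcr]
    have hrowp : ∑ q', (pairF c hdim p q' x' - pairF c hdim p q' u)
        = (1 - t) + ∑ r ∈ R, (β r v - β r (u p)) := by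
      refine (hsplit (fun q' => pairF c hdim p q' x' - pairF c hdim p q' u)).trans ?_
      simp only [h1, h2, Finset.sum_congr rfl h3]
      ring
    -- row q
    have hq1 : pairF c hdim q p x' - pairF c hdim q p u = 1 - t := by
      have hxx : pairF c hdim q p x' = 1 := by
        rw [pairF_pos c hdim q p h.symm x']
        have e1 : ∑ i, x' q i * x' p (Fin.cast (hdim q p h.symm) i) = ∑ k, v k * v k :=
          (sum_reindex e (fun k => v k * v k)
            (fun i => x' q i * x' p (Fin.cast (hdim q p h.symm) i)) (fun k => by
              rw [hx'p, hx'q]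
              simp [fin_cast_cast, fin_cast_self])).symm
        rw [e1, dot_self_unit hvu]
      have huu : pairF c hdim q p u = t := by
        rw [pairF_pos c hdim q p h.symm u, ht]
        refine ((sum_reindex e (fun k => u p k * b k)
          (fun i => u q i * u p (Fin.cast (hdim q p h.symm) i)) (fun k => by
            simp only [hb, fin_cast_cast, fin_cast_self]
            exact mul_comm _ _)).symm)
      rw [hxx, huu]
    have hq2 : pairF c hdim q q x' - pairF c hdim q q u = 0 := by
      have hxx : pairF c hdim q q x' = 1 := by
        rw [pairF_pos c hdim q q rfl x']
        have e1 : ∑ i, x' q i * x' q (Fin.cast (hdim q q rfl) i) = ∑ k, v k * v k :=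
          (sum_reindex e (fun k => v k * v k)
            (fun i => x' q i * x' q (Fin.cast (hdim q q rfl) i)) (fun k => by
              rw [hx'q]
              simp [fin_cast_cast, fin_cast_self])).symm
        rw [e1, dot_self_unit hvu]
      have huu : pairF c hdim q q u = 1 := by
        rw [pairF_pos c hdim q q rfl u]
        have e1 : ∑ i, u q i * u q (Fin.cast (hdim q q rfl) i) = ∑ i, u q i * u q i :=
          Finset.sum_congr rfl fun i _ => by simp [fin_cast_self]
        rw [e1, dot_self_unit (huU q)]
      rw [hxx, huu]; ring
    have hq3 : ∀ r ∈ R, pairF c hdim q r x' - pairF c hdim q r u = β r v - β r b := by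
      intro r hr
      obtain ⟨hrp, hrq⟩ := hrmem r hr
      by_cases hcr : c p = c r
      · have hqr : c q = c r := h.symm.trans hcr
        have hxx : pairF c hdim q r x' = β r v := by
          rw [pairF_pos c hdim q r hqr x', hx'r r hrp hrq]
          simp only [hβ, dif_pos hcr]
          refine ((sum_reindex e (fun k => v k * u r (Fin.cast (hdim p r hcr) k))
            (fun i => x' q i * u r (Fin.cast (hdim q r hqr) i)) (fun k => by
              rw [hx'q]
              simp [fin_cast_cast, fin_cast_self])).symm)
        have huu : pairF c hdim q r u = β r b := by
          rw [pairF_pos c hdim q r hqr u]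
          simp only [hβ, dif_pos hcr]
          refine ((sum_reindex e (fun k => b k * u r (Fin.cast (hdim p r hcr) k))
            (fun i => u q i * u r (Fin.cast (hdim q r hqr) i)) (fun k => by
              simp only [hb, fin_cast_cast])).symm)
        rw [hxx, huu]
      · have hqr : ¬ c q = c r := fun hh => hcr (h.trans hh)
        rw [pairF_neg c hdim hqr x', pairF_neg c hdim hqr u]
        simp only [hβ, dif_neg hcr]
    have hrowq : ∑ q', (pairF c hdim q q' x' - pairF c hdim q q' u)
        = (1 - t) + ∑ r ∈ R, (β r v - β r b) := by
      refine (hsplit (fun q' => pairF c hdim q q' x' - pairF c hdim q q' u)).trans ?_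
      simp only [hq1, hq2, Finset.sum_congr rfl hq3]
      ring
    -- rows r ∈ R
    have hrowr : ∀ r ∈ R, ∑ q', (pairF c hdim r q' x' - pairF c hdim r q' u)
        = (β r v - β r (u p)) + (β r v - β r b) := by
      intro r hr
      obtain ⟨hrp, hrq⟩ := hrmem r hr
      have hr1 : pairF c hdim r p x' - pairF c hdim r p u = β r v - β r (u p) := by
        by_cases hcr : c p = c r
        · have erp : n p = n r := hdim p r hcr
          have hxx : pairF c hdim r p x' = β r v := by
            rw [pairF_pos c hdim r p hcr.symm x', hx'r r hrp hrq]
            simp only [hβ, dif_pos hcr]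
            refine ((sum_reindex erp (fun k => v k * u r (Fin.cast (hdim p r hcr) k))
              (fun i => u r i * x' p (Fin.cast (hdim r p hcr.symm) i)) (fun k => by
                rw [hx'p]
                simp [fin_cast_cast, fin_cast_self]
                exact mul_comm _ _)).symm)
          have huu : pairF c hdim r p u = β r (u p) := by
            rw [pairF_pos c hdim r p hcr.symm u]
            simp only [hβ, dif_pos hcr]
            refine ((sum_reindex erp (fun k => u p k * u r (Fin.cast (hdim p r hcr) k))
              (fun i => u r i * u p (Fin.cast (hdim r p hcr.symm) i)) (fun k => by
                simp [fin_cast_cast, fin_cast_self]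
                exact mul_comm _ _)).symm)
          rw [hxx, huu]
        · have hrp' : ¬ c r = c p := fun hh => hcr hh.symm
          rw [pairF_neg c hdim hrp' x', pairF_neg c hdim hrp' u]
          simp only [hβ, dif_neg hcr]
      have hr2 : pairF c hdim r q x' - pairF c hdim r q u = β r v - β r b := by
        by_cases hcr : c p = c r
        · have erp : n p = n r := hdim p r hcr
          have hrq' : c r = c q := hcr.symm.trans h
          have hxx : pairF c hdim r q x' = β r v := by
            rw [pairF_pos c hdim r q hrq' x', hx'q, hx'r r hrp hrq]
            simp only [hβ, dif_pos hcr]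
            refine ((sum_reindex erp (fun k => v k * u r (Fin.cast (hdim p r hcr) k))
              (fun i => u r i *
                v (Fin.cast e.symm (Fin.cast (hdim r q hrq') i)))
              (fun k => by
                simp [fin_cast_cast, fin_cast_self]
                exact mul_comm _ _)).symm)
          have huu : pairF c hdim r q u = β r b := by
            rw [pairF_pos c hdim r q hrq' u]
            simp only [hβ, dif_pos hcr]
            refine ((sum_reindex erp (fun k => b k * u r (Fin.cast (hdim p r hcr) k))
              (fun i => u r i * u q (Fin.cast (hdim r q hrq') i)) (fun k => by
                simp only [hb, fin_cast_cast]
                exact mul_comm _ _)).symm)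
          rw [hxx, huu]
        · have hrq' : ¬ c r = c q := fun hh => hcr ((hh.trans h.symm)).symm
          rw [pairF_neg c hdim hrq' x', pairF_neg c hdim hrq' u]
          simp only [hβ, dif_neg hcr]
      have hr3 : ∀ r' ∈ R, pairF c hdim r r' x' - pairF c hdim r r' u = 0 := by
        intro r' hr'
        obtain ⟨hr'p, hr'q⟩ := hrmem r' hr'
        by_cases hcr : c r = c r'
        · rw [pairF_pos c hdim r r' hcr x', pairF_pos c hdim r r' hcr u,
            hx'r r hrp hrq, hx'r r' hr'p hr'q]
          ring
        · rw [pairF_neg c hdim hcr x', pairF_neg c hdim hcr u]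
          ring
      refine (hsplit (fun q' => pairF c hdim r q' x' - pairF c hdim r q' u)).trans ?_
      simp only [hr1, hr2, Finset.sum_congr rfl hr3]
      simp
    -- total
    have hout : gfun c hdim x' - gfun c hdim u
        = ∑ p', (∑ q', (pairF c hdim p' q' x' - pairF c hdim p' q' u)) := by
      rw [gfun, gfun, ← Finset.sum_sub_distrib]
      exact Finset.sum_congr rfl fun p' _ => (Finset.sum_sub_distrib _ _).symm
    have htotal : gfun c hdim x' - gfun c hdim u
        = (2 - 2 * t) + (4 * ∑ r ∈ R, β r v
            - 2 * ((∑ r ∈ R, β r (u p)) + ∑ r ∈ R, β r b)) := by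
      refine (hout.trans ((hsplit (fun p' => ∑ q',
        (pairF c hdim p' q' x' - pairF c hdim p' q' u))).trans ?_))
      rw [hrowp, hrowq, Finset.sum_congr rfl hrowr, Finset.sum_add_distrib,
        Finset.sum_sub_distrib, Finset.sum_sub_distrib]
      ring
    have hcontra : 0 < gfun c hdim x' - gfun c hdim u := by
      rw [htotal]
      nlinarith [hvcross, htlt]
    linarith [hgle]
  -- conclude from t = 1
  have hzero : ∑ i, (u p i - b i) ^ 2 = 0 := by rw [hsub, ht1]; ring
  intro k
  have h0 : ∀ i ∈ Finset.univ, (0:ℝ) ≤ (u p i - b i) ^ 2 := fun i _ => sq_nonneg _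
  have h1 := (Finset.sum_eq_zero_iff_of_nonneg h0).mp hzero k (Finset.mem_univ k)
  have h2 := pow_eq_zero_iff (n := 2) (by norm_num) |>.mp h1
  have hbk : b k = u p k := by linarith
  exact hbk

/-- Core existence result: a symmetric maximizer of the pairing. -/
lemma exists_sym_max (hn : ∀ j, 0 < n j)
    (T : (∀ j, Fin (n j)) → ℝ) (hT : T ≠ 0) (c : Fin d → Fin m)
    (hdim : ∀ p q, c p = c q → n p = n q)
    (hsym : ∀ (p q : Fin d) (h : c p = c q) (idx : ∀ j, Fin (n j)),
      T (swapAt p q (hdim p q h) idx) = T idx) :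
    ∃ u : ∀ j, Fin (n j) → ℝ, (∀ j, isUnitVec (u j)) ∧
      (∀ x, (∀ j, isUnitVec (x j)) → tinner T (dtens x) ^ 2 ≤ tinner T (dtens u) ^ 2) ∧
      (∀ (p q : Fin d) (h : c p = c q) (k : Fin (n p)),
        u q (Fin.cast (hdim p q h) k) = u p k) := by
  classical
  set cf : (∀ j, Fin (n j) → ℝ) → ℝ := fun x => tinner T (dtens x) with hcf
  set U : Set (∀ j, Fin (n j) → ℝ) := {x | ∀ j, isUnitVec (x j)} with hU
  have hUc : IsCompact U := by
    have hpi : U = Set.pi Set.univ (fun j => {v | isUnitVec v}) := by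
      ext x; simp [hU, Set.mem_pi]
    rw [hpi]
    exact isCompact_univ_pi fun j => unit_compact
  have hUne : U.Nonempty :=
    ⟨fun j i => if i = ⟨0, hn j⟩ then 1 else 0, fun j => delta_unit _⟩
  have hcont : Continuous cf := cfun_continuous T
  obtain ⟨x₁, hx₁U, hx₁max⟩ := hUc.exists_isMaxOn hUne ((hcont.pow 2)).continuousOn
  set S : Set (∀ j, Fin (n j) → ℝ) := U ∩ {x | cf x ^ 2 = cf x₁ ^ 2} with hS
  have hSc : IsCompact S := hUc.inter_right (isClosed_eq (hcont.pow 2) continuous_const)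
  have hSne : S.Nonempty := ⟨x₁, hx₁U, rfl⟩
  obtain ⟨u, huS, humax⟩ := hSc.exists_isMaxOn hSne (gfun_continuous c hdim).continuousOn
  have huU : ∀ j, isUnitVec (u j) := huS.1
  have huMax : cf u ^ 2 = cf x₁ ^ 2 := huS.2
  have hmax2 : ∀ x, (∀ j, isUnitVec (x j)) → cf x ^ 2 ≤ cf u ^ 2 := by
    intro x hx
    have hx' : x ∈ U := hx
    calc cf x ^ 2 ≤ cf x₁ ^ 2 := hx₁max hx'
    _ = cf u ^ 2 := huMax.symm
  have hgmax : ∀ x, (∀ j, isUnitVec (x j)) → cf x ^ 2 = cf u ^ 2 →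
      gfun c hdim x ≤ gfun c hdim u := by
    intro x hx hxeq
    exact humax (⟨hx, hxeq.trans huMax⟩ : x ∈ S)
  refine ⟨u, huU, fun x hx => hmax2 x hx, ?_⟩
  intro p q h k
  by_cases hpq : p = q
  · subst hpq
    exact congrArg (u p) (Fin.ext rfl)
  · exact step_exchange T c hdim hsym u huU hmax2 hgmax h hpq k

end Core

/-- Main theorem: if `[d] = α₁ ∪ ⋯ ∪ α_m` is a partition (given by the block map `c`)
such that `T ≠ 0` is symmetric with respect to each block `α_j`, then `T` has a best rank
one approximation `a · u₁ ⊗ ⋯ ⊗ u_d` with `u_p = u_q` whenever `p, q` lie in the same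
block. -/
theorem stmt16 {d m : ℕ} {n : Fin d → ℕ} (hn : ∀ j, 0 < n j)
    (T : (∀ j, Fin (n j)) → ℝ) (hT : T ≠ 0)
    (c : Fin d → Fin m)
    (hdim : ∀ p q, c p = c q → n p = n q)
    (hsym : ∀ (p q : Fin d) (h : c p = c q) (idx : ∀ j, Fin (n j)),
      T (swapAt p q (hdim p q h) idx) = T idx) :
    ∃ (a : ℝ) (u : ∀ j, Fin (n j) → ℝ), (∀ j, isUnitVec (u j)) ∧
      (∀ (s : ℝ) (x : ∀ j, Fin (n j) → ℝ), (∀ j, isUnitVec (x j)) →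
        hsNorm (T - a • dtens u) ≤ hsNorm (T - s • dtens x)) ∧
      ∀ (p q : Fin d) (h : c p = c q) (k : Fin (n p)),
        u q (Fin.cast (hdim p q h) k) = u p k := by
  obtain ⟨u, huU, humax, husym⟩ := exists_sym_max hn T hT c hdim hsym
  refine ⟨tinner T (dtens u), u, huU, ?_, husym⟩
  intro s x hx
  have expand : ∀ (A : (∀ j, Fin (n j)) → ℝ) (r : ℝ),
      ∑ idx, (T - r • A) idx ^ 2 =
        (∑ idx, T idx ^ 2) - 2 * r * (tinner T A) + r ^ 2 * ∑ idx, A idx ^ 2 := by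
    intro A r
    rw [tinner, Finset.mul_sum, Finset.mul_sum, ← Finset.sum_sub_distrib,
      ← Finset.sum_add_distrib]
    apply Finset.sum_congr rfl; intro idx _
    simp only [Pi.sub_apply, Pi.smul_apply, smul_eq_mul]
    ring
  apply Real.sqrt_le_sqrt
  rw [expand, expand, dtens_sq u huU, dtens_sq x hx]
  have h1 : tinner T (dtens x) ^ 2 ≤ tinner T (dtens u) ^ 2 := humax x hx
  nlinarith [sq_nonneg (s - tinner T (dtens x))]

end
end
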